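/- arXiv:1410.1011 — 9 statements merged into one kernel-verified Lean document; each statement's English description precedes it below -/
import Mathlib

section
/- With [·,·] and basis {e₊,e₀,e₁,e₂} as in the frozen-mode Gram matrix (with [e₊,e₊]=1, [e₀,e₂]=[e₂,e₀]=[e₁,e₁]=-1, other pairings zero), suppose T is flux-unitary, T e₊ = a₊ e₊ + a₀ e₀ + a₁ e₁ and T e₀ = b₊ e₊ + b₀ e₀ + b₁ e₁ (i.e. T maps the span V̊₊ = span{e₊,e₀} into V̊ = span{e₊,e₀,e₁}). Then b₊ = b₁ = 0 and T e₀ = b₀ e₀ with b₀ ≠ 0. -/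
open scoped ComplexConjugate

/-- If a flux-unitary `T` maps `V̊₊ = span{e₊,e₀}` into `V̊ = span{e₊,e₀,e₁}`,
with `T e₊ = aP e₊ + a₀ e₀ + a₁ e₁` and `T e₀ = bP e₊ + b₀ e₀ + b₁ e₁`, then
`bP = b₁ = 0` and `b₀ ≠ 0`.  Basis convention: `e 0 = e₊`, `e 1 = e₀`,
`e 2 = e₁`, `e 3 = e₂`. -/
theorem stmt_3
    (B : (Fin 4 → ℂ) → (Fin 4 → ℂ) → ℂ)
    (hadd₁ : ∀ x y z, B (x + y) z = B x z + B y z)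
    (hadd₂ : ∀ x y z, B x (y + z) = B x y + B x z)
    (hsmul₁ : ∀ (c : ℂ) (x y), B (c • x) y = conj c * B x y)
    (hsmul₂ : ∀ (c : ℂ) (x y), B x (c • y) = c * B x y)
    (e : Module.Basis (Fin 4) ℂ (Fin 4 → ℂ))
    (hG : ∀ i j, B (e i) (e j) =
      !![(1:ℂ),0,0,0; 0,0,0,-1; 0,0,-1,0; 0,-1,0,0] i j)
    (T : (Fin 4 → ℂ) ≃ₗ[ℂ] (Fin 4 → ℂ))
    (hT : ∀ x y, B (T x) (T y) = B x y)
    (aP a₀ a₁ bP b₀ b₁ : ℂ)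
    (hTeP : T (e 0) = aP • e 0 + a₀ • e 1 + a₁ • e 2)
    (hTe₀ : T (e 1) = bP • e 0 + b₀ • e 1 + b₁ • e 2) :
    bP = 0 ∧ b₁ = 0 ∧ b₀ ≠ 0 := by
  have h1 : conj aP * aP - conj a₁ * a₁ = 1 := by
    have h := hT (e 0) (e 0)
    rw [hTeP] at h
    simp only [hadd₁, hadd₂, hsmul₁, hsmul₂, hG] at h
    norm_num [Matrix.cons_val_zero, Matrix.cons_val_one, Matrix.head_cons,
      Matrix.cons_val', Matrix.empty_val', Matrix.vecHead, Matrix.vecTail, Matrix.cons_val_two] at h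
    linear_combination h
  have h2 : conj aP * bP - conj a₁ * b₁ = 0 := by
    have h := hT (e 0) (e 1)
    rw [hTeP, hTe₀] at h
    simp only [hadd₁, hadd₂, hsmul₁, hsmul₂, hG] at h
    norm_num [Matrix.cons_val_zero, Matrix.cons_val_one, Matrix.head_cons,
      Matrix.cons_val', Matrix.empty_val', Matrix.vecHead, Matrix.vecTail, Matrix.cons_val_two] at h
    linear_combination h
  have h2' : conj bP * aP - conj b₁ * a₁ = 0 := by
    have h := hT (e 1) (e 0)
    rw [hTeP, hTe₀] at h
    simp only [hadd₁, hadd₂, hsmul₁, hsmul₂, hG] at h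
    norm_num [Matrix.cons_val_zero, Matrix.cons_val_one, Matrix.head_cons,
      Matrix.cons_val', Matrix.empty_val', Matrix.vecHead, Matrix.vecTail, Matrix.cons_val_two] at h
    linear_combination h
  have h3 : conj bP * bP - conj b₁ * b₁ = 0 := by
    have h := hT (e 1) (e 1)
    rw [hTe₀] at h
    simp only [hadd₁, hadd₂, hsmul₁, hsmul₂, hG] at h
    norm_num [Matrix.cons_val_zero, Matrix.cons_val_one, Matrix.head_cons,
      Matrix.cons_val', Matrix.empty_val', Matrix.vecHead, Matrix.vecTail, Matrix.cons_val_two] at h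
    linear_combination h
  have hbP : bP = 0 := by
    have key : conj bP * bP = 0 := by
      linear_combination (-(conj bP * bP)) * h1 + (conj b₁ * a₁) * h2 +
        (conj aP * bP) * h2' + (-(conj a₁ * a₁)) * h3
    have : Complex.normSq bP = 0 := by
      have := Complex.normSq_eq_conj_mul_self (z := bP)
      rw [key] at this; exact_mod_cast this
    exact Complex.normSq_eq_zero.mp this
  have hb₁ : b₁ = 0 := by
    have key : conj b₁ * b₁ = 0 := by rw [hbP] at h3; linear_combination -h3
    have : Complex.normSq b₁ = 0 := by
      have := Complex.normSq_eq_conj_mul_self (z := b₁)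
      rw [key] at this; exact_mod_cast this
    exact Complex.normSq_eq_zero.mp this
  refine ⟨hbP, hb₁, ?_⟩
  intro hb₀
  have : T (e 1) = 0 := by rw [hTe₀, hbP, hb₁, hb₀]; simp
  have := T.injective (by rw [this, map_zero] : T (e 1) = T 0)
  exact e.ne_zero 1 this
end

section
/- Let [·,·] on ℂ⁴ have the frozen-mode Gram matrix in the basis {e₊,e₀,e₁,e₂} ([e₊,e₊]=1, [e₀,e₂]=[e₂,e₀]=[e₁,e₁]=-1, other pairings zero), and let T be flux-unitary with T e₀ = ℓ e₀, ℓ ≠ 0. Then, writing T in this basis, the (2,1), (3,1), (3,0), (3,2) entries vanish (columns/rows indexed by +,0,1,2), the (3,3) entry equals 1/conj(ℓ), and the entries satisfy |a₊₊|² − |a₁₊|² = 1, |a₁₁|² − |a₊₁|² = 1, and conj(a₊₊)·a₊₁ = conj(a₁₊)·a₁₁; in particular a₊₊ ≠ 0 and a₁₁ ≠ 0. -/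
open scoped ComplexConjugate

/-- Structure of a flux-unitary matrix in the resonant case `T e₀ = ℓ e₀`.
Basis convention: `e 0 = e₊`, `e 1 = e₀`, `e 2 = e₁`, `e 3 = e₂`; the matrix
entry `A i j` is the `e i`-component of `T (e j)`. -/
theorem stmt_4
    (B : (Fin 4 → ℂ) → (Fin 4 → ℂ) → ℂ)
    (hadd₁ : ∀ x y z, B (x + y) z = B x z + B y z)
    (hadd₂ : ∀ x y z, B x (y + z) = B x y + B x z)
    (hsmul₁ : ∀ (c : ℂ) (x y), B (c • x) y = conj c * B x y)
    (hsmul₂ : ∀ (c : ℂ) (x y), B x (c • y) = c * B x y)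
    (e : Module.Basis (Fin 4) ℂ (Fin 4 → ℂ))
    (hG : ∀ i j, B (e i) (e j) =
      !![(1:ℂ),0,0,0; 0,0,0,-1; 0,0,-1,0; 0,-1,0,0] i j)
    (T : (Fin 4 → ℂ) ≃ₗ[ℂ] (Fin 4 → ℂ))
    (hT : ∀ x y, B (T x) (T y) = B x y)
    (ℓ : ℂ) (hℓ0 : ℓ ≠ 0) (hℓ : T (e 1) = ℓ • e 1)
    (A : Fin 4 → Fin 4 → ℂ) (hA : ∀ i j, A i j = e.repr (T (e j)) i) :
    A 2 1 = 0 ∧ A 3 1 = 0 ∧ A 3 0 = 0 ∧ A 3 2 = 0 ∧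
    A 3 3 = (conj ℓ)⁻¹ ∧
    ‖A 0 0‖ ^ 2 - ‖A 2 0‖ ^ 2 = 1 ∧
    ‖A 2 2‖ ^ 2 - ‖A 0 2‖ ^ 2 = 1 ∧
    conj (A 0 0) * A 0 2 = conj (A 2 0) * A 2 2 ∧
    A 0 0 ≠ 0 ∧ A 2 2 ≠ 0 := by
  have key : ∀ x y, B x y = conj (e.repr x 0) * e.repr y 0
      - conj (e.repr x 1) * e.repr y 3 - conj (e.repr x 2) * e.repr y 2
      - conj (e.repr x 3) * e.repr y 1 := by
    intro x y
    have hx := e.sum_repr x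
    have hy := e.sum_repr y
    rw [Fin.sum_univ_four] at hx hy
    conv_lhs => rw [← hx, ← hy]
    simp only [hadd₁, hadd₂, hsmul₁, hsmul₂, hG]
    norm_num [Matrix.cons_val_two, Matrix.cons_val_three, Matrix.cons_val_zero, Matrix.cons_val_one, Matrix.head_cons,
      Matrix.cons_val_fin_one, Matrix.vecHead, Matrix.vecTail, Function.comp]
    ring
  have main : ∀ j k, conj (A 0 j) * A 0 k - conj (A 1 j) * A 3 k
      - conj (A 2 j) * A 2 k - conj (A 3 j) * A 1 k =
      !![(1:ℂ),0,0,0; 0,0,0,-1; 0,0,-1,0; 0,-1,0,0] j k := by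
    intro j k
    rw [← hG j k, ← hT, key]
    simp [hA]
  have hA1 : ∀ i, A i 1 = if i = 1 then ℓ else 0 := by
    intro i
    rw [hA, hℓ]
    simp [Finsupp.single_apply, eq_comm]
  have h21 : A 2 1 = 0 := by simpa using hA1 2
  have h31 : A 3 1 = 0 := by simpa using hA1 3
  have h11 : A 1 1 = ℓ := by simpa using hA1 1
  have h01 : A 0 1 = 0 := by simpa using hA1 0
  have hℓc : conj ℓ ≠ 0 := by simpa using hℓ0
  have h30 : A 3 0 = 0 := by
    have := main 1 0
    rw [h01, h11, h21, h31] at this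
    norm_num at this
    tauto
  have h32 : A 3 2 = 0 := by
    have := main 1 2
    rw [h01, h11, h21, h31] at this
    norm_num [Matrix.cons_val_two, Matrix.cons_val_three, Matrix.vecHead, Matrix.vecTail] at this
    tauto
  have h33 : A 3 3 = (conj ℓ)⁻¹ := by
    have := main 1 3
    rw [h01, h11, h21, h31] at this
    norm_num [Matrix.cons_val_two, Matrix.cons_val_three, Matrix.vecHead, Matrix.vecTail] at this
    field_simp
    linear_combination this
  have e00 : conj (A 0 0) * A 0 0 - conj (A 2 0) * A 2 0 = 1 := by
    have := main 0 0
    rw [h30] at this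
    norm_num at this
    linear_combination this
  have e22 : conj (A 2 2) * A 2 2 - conj (A 0 2) * A 0 2 = 1 := by
    have := main 2 2
    rw [h32] at this
    norm_num [Matrix.cons_val_two, Matrix.cons_val_three, Matrix.vecHead, Matrix.vecTail] at this
    linear_combination -this
  have e02 : conj (A 0 0) * A 0 2 = conj (A 2 0) * A 2 2 := by
    have := main 0 2
    rw [h30, h32] at this
    norm_num [Matrix.cons_val_two, Matrix.cons_val_three, Matrix.vecHead, Matrix.vecTail] at this
    linear_combination this
  have n00 : ‖A 0 0‖ ^ 2 - ‖A 2 0‖ ^ 2 = 1 := by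
    have : ((‖A 0 0‖ ^ 2 - ‖A 2 0‖ ^ 2 : ℝ) : ℂ) = 1 := by
      push_cast
      rw [← Complex.conj_mul', ← Complex.conj_mul']
      linear_combination e00
    exact_mod_cast this
  have n22 : ‖A 2 2‖ ^ 2 - ‖A 0 2‖ ^ 2 = 1 := by
    have : ((‖A 2 2‖ ^ 2 - ‖A 0 2‖ ^ 2 : ℝ) : ℂ) = 1 := by
      push_cast
      rw [← Complex.conj_mul', ← Complex.conj_mul']
      linear_combination e22
    exact_mod_cast this
  refine ⟨h21, h31, h30, h32, h33, n00, n22, e02, ?_, ?_⟩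
  · intro h
    rw [h] at n00
    simp at n00
    nlinarith [norm_nonneg (A 2 0)]
  · intro h
    rw [h] at n22
    simp at n22
    nlinarith [norm_nonneg (A 0 2)]
end

section
/- Let [·,·] have the frozen-mode Gram matrix and let T be flux-unitary with T[V̊] = V̊ where V̊ = span{e₊,e₀,e₁}. Then T e₀ is a scalar multiple of e₀. -/
open scoped ComplexConjugate

/-- If a flux-unitary `T` satisfies `T[V̊] = V̊` with `V̊ = span{e₊,e₀,e₁}`,
then `T e₀` is a scalar multiple of `e₀`.  Basis convention: `e 0 = e₊`,
`e 1 = e₀`, `e 2 = e₁`, `e 3 = e₂`. -/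
theorem stmt_7
    (B : (Fin 4 → ℂ) → (Fin 4 → ℂ) → ℂ)
    (hadd₁ : ∀ x y z, B (x + y) z = B x z + B y z)
    (hadd₂ : ∀ x y z, B x (y + z) = B x y + B x z)
    (hsmul₁ : ∀ (c : ℂ) (x y), B (c • x) y = conj c * B x y)
    (hsmul₂ : ∀ (c : ℂ) (x y), B x (c • y) = c * B x y)
    (e : Module.Basis (Fin 4) ℂ (Fin 4 → ℂ))
    (hG : ∀ i j, B (e i) (e j) =
      !![(1:ℂ),0,0,0; 0,0,0,-1; 0,0,-1,0; 0,-1,0,0] i j)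
    (T : (Fin 4 → ℂ) ≃ₗ[ℂ] (Fin 4 → ℂ))
    (hT : ∀ x y, B (T x) (T y) = B x y)
    (hinv : (Submodule.span ℂ ({e 0, e 1, e 2} : Set (Fin 4 → ℂ))).map T.toLinearMap
      = Submodule.span ℂ ({e 0, e 1, e 2} : Set (Fin 4 → ℂ))) :
    ∃ ℓ : ℂ, T (e 1) = ℓ • e 1 := by
  set V := Submodule.span ℂ ({e 0, e 1, e 2} : Set (Fin 4 → ℂ)) with hVdef
  have hB0₂ : ∀ x, B x 0 = 0 := by
    intro x
    have h := hadd₂ x 0 0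
    simp only [add_zero] at h
    exact (left_eq_add.mp h)
  -- the radical property: B (e 1) v = 0 for all v ∈ V
  have hrad : ∀ v ∈ V, B (e 1) v = 0 := by
    intro v hv
    induction hv using Submodule.span_induction with
    | mem x hx =>
      simp only [Set.mem_insert_iff, Set.mem_singleton_iff] at hx
      rcases hx with rfl | rfl | rfl
      · have := hG 1 0; simpa using this
      · have := hG 1 1; simpa using this
      · have := hG 1 2; simpa using this
    | zero => exact hB0₂ _
    | add x y hx hy ihx ihy => rw [hadd₂, ihx, ihy, add_zero]
    | smul c x hx ih => rw [hsmul₂, ih, mul_zero]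
  -- B (T e1) w = 0 for all w ∈ V
  have hTperp : ∀ w ∈ V, B (T (e 1)) w = 0 := by
    intro w hw
    rw [← hinv] at hw
    obtain ⟨u, hu, rfl⟩ := hw
    simp only [LinearEquiv.coe_coe]
    rw [hT]
    exact hrad u hu
  -- membership lemmas
  have he0 : e 0 ∈ V := Submodule.subset_span (by simp)
  have he1 : e 1 ∈ V := Submodule.subset_span (by simp)
  have he2 : e 2 ∈ V := Submodule.subset_span (by simp)
  -- expand T e1 in the basis
  set x := T (e 1) with hxdef
  set c : Fin 4 → ℂ := fun i => e.repr x i with hcdef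
  have hx : ∑ i, c i • e i = x := Module.Basis.sum_repr e x
  -- sum formula for B in the first argument
  have hsum : ∀ j : Fin 4, B x (e j) = ∑ i, conj (c i) * B (e i) (e j) := by
    intro j
    rw [← hx]
    rw [Fin.sum_univ_four, Fin.sum_univ_four]
    rw [hadd₁, hadd₁, hadd₁, hsmul₁, hsmul₁, hsmul₁, hsmul₁]
  have key : ∀ j : Fin 4, e j ∈ V → (∑ i, conj (c i) * B (e i) (e j)) = 0 := by
    intro j hj
    rw [← hsum]
    exact hTperp _ hj
  have hc0 : c 0 = 0 := by
    have := key 0 he0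
    rw [Fin.sum_univ_four] at this
    simp only [hG] at this
    simpa [Matrix.vecHead, Matrix.vecTail] using this
  have hc3 : c 3 = 0 := by
    have := key 1 he1
    rw [Fin.sum_univ_four] at this
    simp only [hG] at this
    simpa [Matrix.vecHead, Matrix.vecTail] using this
  have hc2 : c 2 = 0 := by
    have := key 2 he2
    rw [Fin.sum_univ_four] at this
    simp only [hG] at this
    simpa [Matrix.vecHead, Matrix.vecTail] using this
  refine ⟨c 1, ?_⟩
  show x = c 1 • e 1
  rw [← hx, Fin.sum_univ_four, hc0, hc2, hc3]
  simp
end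

section
/- Let [·,·] have the frozen-mode Gram matrix and let T be flux-unitary. If D̊ := [T e₊,e₊][T e₀,e₀] − [T e₊,e₀][T e₀,e₊] ≠ 0, then the intersection of T⁻¹[span{e₊,e₀}] with span{e₊,e₀,e₁} is one-dimensional, and any nonzero vector v = a e₊ + b e₀ + c e₁ in this intersection has a ≠ 0. -/
open scoped ComplexConjugate

/-- Nonresonant case `D̊ ≠ 0`: the intersection `T⁻¹[span{e₊,e₀}] ∩ span{e₊,e₀,e₁}`
is one-dimensional, and any nonzero `v = a e₊ + b e₀ + c e₁` in it has `a ≠ 0`.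
Basis convention: `e 0 = e₊`, `e 1 = e₀`, `e 2 = e₁`, `e 3 = e₂`. -/
theorem stmt_8
    (B : (Fin 4 → ℂ) → (Fin 4 → ℂ) → ℂ)
    (hadd₁ : ∀ x y z, B (x + y) z = B x z + B y z)
    (hadd₂ : ∀ x y z, B x (y + z) = B x y + B x z)
    (hsmul₁ : ∀ (c : ℂ) (x y), B (c • x) y = conj c * B x y)
    (hsmul₂ : ∀ (c : ℂ) (x y), B x (c • y) = c * B x y)
    (e : Module.Basis (Fin 4) ℂ (Fin 4 → ℂ))
    (hG : ∀ i j, B (e i) (e j) =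
      !![(1:ℂ),0,0,0; 0,0,0,-1; 0,0,-1,0; 0,-1,0,0] i j)
    (T : (Fin 4 → ℂ) ≃ₗ[ℂ] (Fin 4 → ℂ))
    (hT : ∀ x y, B (T x) (T y) = B x y)
    (hD : B (T (e 0)) (e 0) * B (T (e 1)) (e 1)
      - B (T (e 0)) (e 1) * B (T (e 1)) (e 0) ≠ 0) :
    Module.finrank ℂ
      ↥((Submodule.span ℂ ({e 0, e 1} : Set (Fin 4 → ℂ))).map T.symm.toLinearMap
        ⊓ Submodule.span ℂ ({e 0, e 1, e 2} : Set (Fin 4 → ℂ))) = 1 ∧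
    ∀ a b c : ℂ,
      a • e 0 + b • e 1 + c • e 2
        ∈ (Submodule.span ℂ ({e 0, e 1} : Set (Fin 4 → ℂ))).map T.symm.toLinearMap →
      a • e 0 + b • e 1 + c • e 2 ≠ 0 → a ≠ 0 := by
  have h00 : B (e 0) (e 0) = 1 := by simpa using hG 0 0
  have h01 : B (e 0) (e 1) = 0 := by simpa using hG 0 1
  have h10 : B (e 1) (e 0) = 0 := by simpa using hG 1 0
  have h11 : B (e 1) (e 1) = 0 := by simpa using hG 1 1
  have h12 : B (e 1) (e 2) = 0 := by simpa using hG 1 2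
  have h21 : B (e 2) (e 1) = 0 := by simpa using hG 2 1
  have h22 : B (e 2) (e 2) = -1 := by simpa using hG 2 2
  set U : Submodule ℂ (Fin 4 → ℂ) :=
    (Submodule.span ℂ ({e 0, e 1} : Set (Fin 4 → ℂ))).map T.symm.toLinearMap with hUdef
  -- key claim : any nonzero element of U of the form a e0 + b e1 + c e2 has a ≠ 0
  have key : ∀ a b c : ℂ,
      a • e 0 + b • e 1 + c • e 2 ∈ U →
      a • e 0 + b • e 1 + c • e 2 ≠ 0 → a ≠ 0 := by
    intro a b c hmem hne ha
    subst ha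
    rw [zero_smul, zero_add] at hmem hne
    obtain ⟨y, hy, hyv⟩ := hmem
    obtain ⟨α, β, hαβ⟩ := Submodule.mem_span_pair.mp hy
    -- T v = α e0 + β e1
    have hTv : T (b • e 1 + c • e 2) = α • e 0 + β • e 1 := by
      rw [← hyv, hαβ]; simp
    -- B(Tv, Tv) = B(v,v)
    have hBB := hT (b • e 1 + c • e 2) (b • e 1 + c • e 2)
    rw [hTv] at hBB
    have hlhs : B (α • e 0 + β • e 1) (α • e 0 + β • e 1) = conj α * α := by
      simp only [hadd₁, hadd₂, hsmul₁, hsmul₂, h00, h01, h10, h11]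
      ring
    have hrhs : B (b • e 1 + c • e 2) (b • e 1 + c • e 2) = -(conj c * c) := by
      simp only [hadd₁, hadd₂, hsmul₁, hsmul₂, h11, h12, h21, h22]
      ring
    rw [hlhs, hrhs] at hBB
    -- deduce α = 0 and c = 0
    have hsum : (Complex.normSq α : ℂ) + (Complex.normSq c : ℂ) = 0 := by
      rw [← Complex.mul_conj, ← Complex.mul_conj]
      linear_combination hBB
    have hsumℝ : Complex.normSq α + Complex.normSq c = 0 := by exact_mod_cast hsum
    have hα : α = 0 := by
      have := Complex.normSq_nonneg α
      have := Complex.normSq_nonneg c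
      have : Complex.normSq α = 0 := by linarith
      exact Complex.normSq_eq_zero.mp this
    have hc : c = 0 := by
      have := Complex.normSq_nonneg α
      have := Complex.normSq_nonneg c
      have : Complex.normSq c = 0 := by linarith
      exact Complex.normSq_eq_zero.mp this
    subst hα; subst hc
    simp only [zero_smul, add_zero, zero_add, smul_zero] at hTv hne
    have hb : b ≠ 0 := by
      intro hb; apply hne; rw [hb, zero_smul]
    -- T e1 = (b⁻¹ * β) • e1
    have hTe1 : T (e 1) = (b⁻¹ * β) • e 1 := by
      have : T (b • e 1) = β • e 1 := hTv
      rw [map_smul] at this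
      rw [mul_smul, ← this, ← smul_assoc, smul_eq_mul, inv_mul_cancel₀ hb, one_smul]
    apply hD
    rw [hTe1, hsmul₁, hsmul₁, h11, h10]
    ring
  constructor
  · -- finrank = 1
    set V : Submodule ℂ (Fin 4 → ℂ) :=
      Submodule.span ℂ ({e 0, e 1, e 2} : Set (Fin 4 → ℂ)) with hVdef
    -- finrank U = 2
    have hind2 : LinearIndependent ℂ ![e 0, e 1] := by
      have h := e.linearIndependent.comp ![0, 1] (by decide)
      have : e ∘ ![0, 1] = ![e 0, e 1] := by
        funext i; fin_cases i <;> rfl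
      rwa [this] at h
    have hrange2 : Set.range ![e 0, e 1] = ({e 0, e 1} : Set (Fin 4 → ℂ)) := by
      ext x
      constructor
      · rintro ⟨i, rfl⟩; fin_cases i <;> simp
      · rintro (rfl | rfl)
        · exact ⟨0, rfl⟩
        · exact ⟨1, rfl⟩
    have hU2 : Module.finrank ℂ U = 2 := by
      rw [hUdef, LinearEquiv.finrank_map_eq, ← hrange2,
        finrank_span_eq_card hind2]
      simp
    have hind3 : LinearIndependent ℂ ![e 0, e 1, e 2] := by
      have h := e.linearIndependent.comp ![0, 1, 2] (by decide)
      have : e ∘ ![0, 1, 2] = ![e 0, e 1, e 2] := by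
        funext i; fin_cases i <;> rfl
      rwa [this] at h
    have hrange3 : Set.range ![e 0, e 1, e 2] = ({e 0, e 1, e 2} : Set (Fin 4 → ℂ)) := by
      ext x
      constructor
      · rintro ⟨i, rfl⟩; fin_cases i <;> simp
      · rintro (rfl | rfl | rfl)
        · exact ⟨0, rfl⟩
        · exact ⟨1, rfl⟩
        · exact ⟨2, rfl⟩
    have hV3 : Module.finrank ℂ V = 3 := by
      rw [hVdef, ← hrange3, finrank_span_eq_card hind3]
      simp
    have hsum := Submodule.finrank_sup_add_finrank_inf_eq U V
    have hsup : Module.finrank ℂ ↥(U ⊔ V) ≤ 4 := by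
      have h := Submodule.finrank_le (U ⊔ V)
      simpa using h
    have hge : 1 ≤ Module.finrank ℂ ↥(U ⊓ V) := by omega
    -- upper bound via injective coordinate map
    have hle : Module.finrank ℂ ↥(U ⊓ V) ≤ 1 := by
      have hinj : Function.Injective ((e.coord 0).comp (U ⊓ V).subtype) := by
        rw [← LinearMap.ker_eq_bot, LinearMap.ker_eq_bot']
        intro x hx
        obtain ⟨hxU, hxV⟩ := x.2
        obtain ⟨a, z, hz, hxz⟩ := Submodule.mem_span_insert.mp hxV
        obtain ⟨b', c', hbc⟩ := Submodule.mem_span_pair.mp hz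
        have hx1 : (x : Fin 4 → ℂ) = a • e 0 + b' • e 1 + c' • e 2 := by
          rw [hxz, ← hbc]; ring_nf
        have hcoord : e.coord 0 (x : Fin 4 → ℂ) = a := by
          rw [hx1]
          simp [Module.Basis.coord_apply, Finsupp.single_apply]
        have ha : a = 0 := by
          rw [← hcoord]
          simpa using hx
        by_cases hx0 : (x : Fin 4 → ℂ) = 0
        · exact Subtype.ext hx0
        · exfalso
          exact key a b' c' (hx1 ▸ hxU) (hx1 ▸ hx0) ha
      have := LinearMap.finrank_le_finrank_of_injective hinj
      simpa using this
    omega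
  · exact key
end

section
/- Let [·,·] have the frozen-mode Gram matrix and T be flux-unitary with D̊ ≠ 0 (nonresonant case). Then the two-dimensional space T⁻¹[span{e₊,e₀}] is spanned by two vectors v̊₊₁ and v̊₊₂ uniquely determined by the conditions: the e₊-component of v̊₊₁ is 1 and its e₂-component is 0; the e₊-component of v̊₊₂ is 0 and its e₂-component is 1. -/
open scoped ComplexConjugate

/-- Nonresonant case: `T⁻¹[span{e₊,e₀}]` is spanned by the two vectors uniquely
determined by having (`e₊`-component, `e₂`-component) equal to `(1,0)` and `(0,1)`
respectively.  Basis convention: `e 0 = e₊`, `e 1 = e₀`, `e 2 = e₁`, `e 3 = e₂`;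
components are coordinates with respect to this basis. -/
theorem stmt_9
    (B : (Fin 4 → ℂ) → (Fin 4 → ℂ) → ℂ)
    (hadd₁ : ∀ x y z, B (x + y) z = B x z + B y z)
    (hadd₂ : ∀ x y z, B x (y + z) = B x y + B x z)
    (hsmul₁ : ∀ (c : ℂ) (x y), B (c • x) y = conj c * B x y)
    (hsmul₂ : ∀ (c : ℂ) (x y), B x (c • y) = c * B x y)
    (e : Module.Basis (Fin 4) ℂ (Fin 4 → ℂ))
    (hG : ∀ i j, B (e i) (e j) =
      !![(1:ℂ),0,0,0; 0,0,0,-1; 0,0,-1,0; 0,-1,0,0] i j)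
    (T : (Fin 4 → ℂ) ≃ₗ[ℂ] (Fin 4 → ℂ))
    (hT : ∀ x y, B (T x) (T y) = B x y)
    (hD : B (T (e 0)) (e 0) * B (T (e 1)) (e 1)
      - B (T (e 0)) (e 1) * B (T (e 1)) (e 0) ≠ 0)
    (W : Submodule ℂ (Fin 4 → ℂ))
    (hW : W = (Submodule.span ℂ ({e 0, e 1} : Set (Fin 4 → ℂ))).map T.symm.toLinearMap) :
    (∃! v1, v1 ∈ W ∧ e.repr v1 0 = 1 ∧ e.repr v1 3 = 0) ∧
    (∃! v2, v2 ∈ W ∧ e.repr v2 0 = 0 ∧ e.repr v2 3 = 1) ∧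
    ∀ v1 v2,
      (v1 ∈ W ∧ e.repr v1 0 = 1 ∧ e.repr v1 3 = 0) →
      (v2 ∈ W ∧ e.repr v2 0 = 0 ∧ e.repr v2 3 = 1) →
      W = Submodule.span ℂ ({v1, v2} : Set (Fin 4 → ℂ)) := by
  set p := B (T (e 0)) (e 0) with hp
  set q := B (T (e 0)) (e 1) with hq
  set r := B (T (e 1)) (e 0) with hr
  set s := B (T (e 1)) (e 1) with hs
  set D := p * s - q * r with hDdef
  -- coordinates 0 and 3 read off via B
  have key : ∀ v : Fin 4 → ℂ, B (e 0) v = e.repr v 0 ∧ B (e 1) v = -(e.repr v 3) := by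
    intro v
    have hv := e.sum_repr v
    rw [Fin.sum_univ_four] at hv
    constructor <;>
    · conv_lhs => rw [← hv]
      simp [hadd₂, hsmul₂, hG]
  -- membership in W
  have memW : ∀ v, v ∈ W ↔ ∃ a b : ℂ, v = T.symm (a • e 0 + b • e 1) := by
    intro v
    rw [hW]
    simp only [Submodule.mem_map, Submodule.mem_span_pair, LinearEquiv.coe_coe]
    constructor
    · rintro ⟨u, ⟨a, b, rfl⟩, rfl⟩; exact ⟨a, b, rfl⟩
    · rintro ⟨a, b, rfl⟩; exact ⟨_, ⟨a, b, rfl⟩, rfl⟩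
  -- coordinates of parametrized elements
  have coord0 : ∀ a b : ℂ, e.repr (T.symm (a • e 0 + b • e 1)) 0 = a * p + b * q := by
    intro a b
    rw [← (key (T.symm (a • e 0 + b • e 1))).1, ← hT, LinearEquiv.apply_symm_apply,
      hadd₂, hsmul₂, hsmul₂]
  have coord3 : ∀ a b : ℂ, e.repr (T.symm (a • e 0 + b • e 1)) 3 = -(a * r + b * s) := by
    intro a b
    have h := (key (T.symm (a • e 0 + b • e 1))).2
    rw [← hT, LinearEquiv.apply_symm_apply, hadd₂, hsmul₂, hsmul₂] at h
    rw [← hr, ← hs] at h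
    linear_combination h
  -- uniqueness of coordinates within W
  have inj : ∀ v ∈ W, ∀ v' ∈ W, e.repr v 0 = e.repr v' 0 → e.repr v 3 = e.repr v' 3 →
      v = v' := by
    intro v hv v' hv' h0 h3
    obtain ⟨a, b, rfl⟩ := (memW v).1 hv
    obtain ⟨a', b', rfl⟩ := (memW v').1 hv'
    rw [coord0, coord0] at h0
    rw [coord3, coord3, neg_inj] at h3
    have ha : a = a' := by
      have h1 : (a - a') * D = 0 := by rw [hDdef]; linear_combination s * h0 - q * h3
      have := mul_eq_zero.1 h1
      rcases this with h | h
      · exact sub_eq_zero.1 h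
      · exact absurd h hD
    have hb : b = b' := by
      have h1 : (b - b') * D = 0 := by rw [hDdef]; linear_combination p * h3 - r * h0
      rcases mul_eq_zero.1 h1 with h | h
      · exact sub_eq_zero.1 h
      · exact absurd h hD
    rw [ha, hb]
  -- the two distinguished vectors
  have hv1mem : T.symm ((s / D) • e 0 + (-r / D) • e 1) ∈ W :=
    (memW _).2 ⟨s / D, -r / D, rfl⟩
  have hv2mem : T.symm ((q / D) • e 0 + (-p / D) • e 1) ∈ W :=
    (memW _).2 ⟨q / D, -p / D, rfl⟩
  have hv1c : e.repr (T.symm ((s / D) • e 0 + (-r / D) • e 1)) 0 = 1 ∧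
      e.repr (T.symm ((s / D) • e 0 + (-r / D) • e 1)) 3 = 0 := by
    rw [coord0, coord3]
    constructor
    · field_simp; rw [hDdef]; ring
    · field_simp; ring
  have hv2c : e.repr (T.symm ((q / D) • e 0 + (-p / D) • e 1)) 0 = 0 ∧
      e.repr (T.symm ((q / D) • e 0 + (-p / D) • e 1)) 3 = 1 := by
    rw [coord0, coord3]
    constructor
    · field_simp; ring
    · field_simp; rw [hDdef]; ring
  refine ⟨⟨_, ⟨hv1mem, hv1c.1, hv1c.2⟩, ?_⟩, ⟨_, ⟨hv2mem, hv2c.1, hv2c.2⟩, ?_⟩, ?_⟩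
  · rintro v ⟨hv, h0, h3⟩
    exact inj v hv _ hv1mem (by rw [h0, hv1c.1]) (by rw [h3, hv1c.2])
  · rintro v ⟨hv, h0, h3⟩
    exact inj v hv _ hv2mem (by rw [h0, hv2c.1]) (by rw [h3, hv2c.2])
  · rintro v1 v2 ⟨hm1, h10, h13⟩ ⟨hm2, h20, h23⟩
    apply le_antisymm
    · intro w hw
      have hc : (e.repr w 0) • v1 + (e.repr w 3) • v2 ∈ W :=
        W.add_mem (W.smul_mem _ hm1) (W.smul_mem _ hm2)
      have heq : w = (e.repr w 0) • v1 + (e.repr w 3) • v2 := by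
        apply inj w hw _ hc
        · simp [h10, h20]
        · simp [h13, h23]
      rw [heq]
      exact Submodule.mem_span_pair.2 ⟨_, _, rfl⟩
    · rw [Submodule.span_le]
      rintro x (rfl | rfl)
      · exact hm1
      · exact hm2
end

section
/- Let [·,·] have the frozen-mode Gram matrix and let T be flux-unitary with T e₀ = ℓ e₀, ℓ ≠ 0 (resonant case), and assume [e₊, T e₁] ≠ 0. Then the space T⁻¹[span{e₊,e₀}] is contained in span{e₊,e₀,e₁} and is spanned by e₀ together with a unique vector ẘ₊ of the form ẘ₊ = e₊ + c e₁ with c ≠ 0. -/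
open scoped ComplexConjugate

/-- Resonant case `T e₀ = ℓ e₀`, `ℓ ≠ 0`, with `[e₊, T e₁] ≠ 0`: the space
`T⁻¹[span{e₊,e₀}]` is contained in `span{e₊,e₀,e₁}` and is spanned by `e₀`
together with a unique vector `ẘ₊ = e₊ + c e₁` with `c ≠ 0`.  Basis
convention: `e 0 = e₊`, `e 1 = e₀`, `e 2 = e₁`, `e 3 = e₂`. -/
theorem stmt_11
    (B : (Fin 4 → ℂ) → (Fin 4 → ℂ) → ℂ)
    (hadd₁ : ∀ x y z, B (x + y) z = B x z + B y z)
    (hadd₂ : ∀ x y z, B x (y + z) = B x y + B x z)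
    (hsmul₁ : ∀ (c : ℂ) (x y), B (c • x) y = conj c * B x y)
    (hsmul₂ : ∀ (c : ℂ) (x y), B x (c • y) = c * B x y)
    (e : Module.Basis (Fin 4) ℂ (Fin 4 → ℂ))
    (hG : ∀ i j, B (e i) (e j) =
      !![(1:ℂ),0,0,0; 0,0,0,-1; 0,0,-1,0; 0,-1,0,0] i j)
    (T : (Fin 4 → ℂ) ≃ₗ[ℂ] (Fin 4 → ℂ))
    (hT : ∀ x y, B (T x) (T y) = B x y)
    (ℓ : ℂ) (hℓ0 : ℓ ≠ 0) (hℓ : T (e 1) = ℓ • e 1)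
    (hgen : B (e 0) (T (e 2)) ≠ 0)
    (W : Submodule ℂ (Fin 4 → ℂ))
    (hW : W = (Submodule.span ℂ ({e 0, e 1} : Set (Fin 4 → ℂ))).map T.symm.toLinearMap) :
    W ≤ Submodule.span ℂ ({e 0, e 1, e 2} : Set (Fin 4 → ℂ)) ∧
    ∃! w, w ∈ W ∧ (∃ c : ℂ, c ≠ 0 ∧ w = e 0 + c • e 2) ∧
      W = Submodule.span ℂ ({e 1, w} : Set (Fin 4 → ℂ)) := by
  -- basic expansion lemmas
  have hrepr : ∀ x : Fin 4 → ℂ,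
      x = e.repr x 0 • e 0 + e.repr x 1 • e 1 + e.repr x 2 • e 2 + e.repr x 3 • e 3 := by
    intro x
    have h := e.sum_repr x
    rw [Fin.sum_univ_four] at h
    exact h.symm
  have hB2 : ∀ (v : Fin 4 → ℂ) (a b c d : ℂ),
      B v (a • e 0 + b • e 1 + c • e 2 + d • e 3)
        = a * B v (e 0) + b * B v (e 1) + c * B v (e 2) + d * B v (e 3) := by
    intro v a b c d
    rw [hadd₂, hadd₂, hadd₂, hsmul₂, hsmul₂, hsmul₂, hsmul₂]
  have hB1 : ∀ (a b c d : ℂ) (v : Fin 4 → ℂ),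
      B (a • e 0 + b • e 1 + c • e 2 + d • e 3) v
        = conj a * B (e 0) v + conj b * B (e 1) v + conj c * B (e 2) v + conj d * B (e 3) v := by
    intro a b c d v
    rw [hadd₁, hadd₁, hadd₁, hsmul₁, hsmul₁, hsmul₁, hsmul₁]
  have hBx : ∀ (v x : Fin 4 → ℂ), B v x
      = e.repr x 0 * B v (e 0) + e.repr x 1 * B v (e 1)
        + e.repr x 2 * B v (e 2) + e.repr x 3 * B v (e 3) := by
    intro v x
    conv_lhs => rw [hrepr x]
    rw [hB2]
  have hBy : ∀ (x v : Fin 4 → ℂ), B x v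
      = conj (e.repr x 0) * B (e 0) v + conj (e.repr x 1) * B (e 1) v
        + conj (e.repr x 2) * B (e 2) v + conj (e.repr x 3) * B (e 3) v := by
    intro x v
    conv_lhs => rw [hrepr x]
    rw [hB1]
  -- Gram values
  have g00 : B (e 0) (e 0) = 1 := by rw [hG]; norm_num [Matrix.vecHead, Matrix.vecTail]
  have g01 : B (e 0) (e 1) = 0 := by rw [hG]; norm_num [Matrix.vecHead, Matrix.vecTail]
  have g02 : B (e 0) (e 2) = 0 := by rw [hG]; rfl
  have g03 : B (e 0) (e 3) = 0 := by rw [hG]; rfl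
  have g10 : B (e 1) (e 0) = 0 := by rw [hG]; norm_num [Matrix.vecHead, Matrix.vecTail]
  have g11 : B (e 1) (e 1) = 0 := by rw [hG]; norm_num [Matrix.vecHead, Matrix.vecTail]
  have g12 : B (e 1) (e 2) = 0 := by rw [hG]; rfl
  have g13 : B (e 1) (e 3) = -1 := by rw [hG]; rfl
  have g20 : B (e 2) (e 0) = 0 := by rw [hG]; rfl
  have g21 : B (e 2) (e 1) = 0 := by rw [hG]; rfl
  have g22 : B (e 2) (e 2) = -1 := by rw [hG]; rfl
  have g23 : B (e 2) (e 3) = 0 := by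
    rw [hG]; rfl
  -- coordinates via B
  have hc0 : ∀ x, B (e 0) x = e.repr x 0 := by
    intro x; rw [hBx, g00, g01, g02, g03]; ring
  have hc1 : ∀ x, B (e 1) x = -e.repr x 3 := by
    intro x; rw [hBx, g10, g11, g12, g13]; ring
  have hc2 : ∀ x, B (e 2) x = -e.repr x 2 := by
    intro x; rw [hBx, g20, g21, g22, g23]; ring
  -- T-invariance along e 1
  have h13 : ∀ y, B (e 1) (T y) = conj ℓ⁻¹ * B (e 1) y := by
    intro y
    have h1 : T (ℓ⁻¹ • e 1) = e 1 := by
      rw [map_smul, hℓ, smul_smul, inv_mul_cancel₀ hℓ0, one_smul]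
    calc B (e 1) (T y) = B (T (ℓ⁻¹ • e 1)) (T y) := by rw [h1]
      _ = B (ℓ⁻¹ • e 1) y := hT _ _
      _ = conj ℓ⁻¹ * B (e 1) y := hsmul₁ _ _ _
  have hℓc : conj ℓ⁻¹ ≠ 0 := by simp [hℓ0]
  set p : Fin 4 →₀ ℂ := e.repr (T (e 0)) with hp
  set q : Fin 4 →₀ ℂ := e.repr (T (e 2)) with hq
  have hp3 : p 3 = 0 := by
    have h := h13 (e 0)
    rw [hc1, g10, mul_zero] at h
    exact neg_eq_zero.mp h
  have hq3 : q 3 = 0 := by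
    have h := h13 (e 2)
    rw [hc1, g12, mul_zero] at h
    exact neg_eq_zero.mp h
  -- flux-unitarity relations
  have hq0 : q 0 ≠ 0 := by rw [hq, ← hc0]; exact hgen
  have R1 : conj (p 0) * p 0 - conj (p 2) * p 2 = 1 := by
    have h := hT (e 0) (e 0)
    rw [hBy (T (e 0)), hc0, hc1, hc2, g00, ← hp, hp3] at h
    simp only [map_zero, zero_mul, add_zero, mul_neg, neg_zero, mul_zero] at h
    linear_combination h
  have R2 : conj (q 0) * q 0 - conj (q 2) * q 2 = -1 := by
    have h := hT (e 2) (e 2)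
    rw [hBy (T (e 2)), hc0, hc1, hc2, g22, ← hq, hq3] at h
    simp only [map_zero, zero_mul, add_zero, mul_neg, neg_zero, mul_zero] at h
    linear_combination h
  have R3 : conj (p 0) * q 0 - conj (p 2) * q 2 = 0 := by
    have h := hT (e 0) (e 2)
    rw [hBy (T (e 0)), hc0, hc1, hc2, g02, ← hp, ← hq, hp3, hq3] at h
    simp only [map_zero, zero_mul, add_zero, mul_neg, neg_zero, mul_zero] at h
    linear_combination h
  have hq2 : q 2 ≠ 0 := by
    intro h0
    rw [h0, mul_zero, sub_zero, mul_comm, Complex.mul_conj] at R2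
    have h2 : Complex.normSq (q 0) = -1 := by exact_mod_cast R2
    linarith [Complex.normSq_nonneg (q 0)]
  have hp2 : p 2 ≠ 0 := by
    intro h0
    rw [h0] at R3
    simp only [map_zero, zero_mul, mul_zero, sub_zero] at R3
    rcases mul_eq_zero.mp R3 with h | h
    · have hp0 : p 0 = 0 := by simpa using h
      rw [hp0, h0] at R1
      simp at R1
    · exact hq0 h
  -- characterization of span {e 0, e 1}
  have hspan01 : ∀ x : Fin 4 → ℂ,
      x ∈ Submodule.span ℂ ({e 0, e 1} : Set (Fin 4 → ℂ)) ↔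
        e.repr x 2 = 0 ∧ e.repr x 3 = 0 := by
    intro x
    constructor
    · intro hx
      obtain ⟨m, n, rfl⟩ := Submodule.mem_span_pair.mp hx
      have h2 : B (e 2) (m • e 0 + n • e 1) = 0 := by
        rw [hadd₂, hsmul₂, hsmul₂, g20, g21]; ring
      have h3 : B (e 1) (m • e 0 + n • e 1) = 0 := by
        rw [hadd₂, hsmul₂, hsmul₂, g10, g11]; ring
      rw [hc2] at h2; rw [hc1] at h3
      exact ⟨neg_eq_zero.mp h2, neg_eq_zero.mp h3⟩
    · rintro ⟨h2, h3⟩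
      rw [Submodule.mem_span_pair]
      refine ⟨e.repr x 0, e.repr x 1, ?_⟩
      conv_rhs => rw [hrepr x]
      rw [h2, h3, zero_smul, zero_smul, add_zero, add_zero]
  -- expansion of T x
  have hTx : ∀ x : Fin 4 → ℂ, T x = e.repr x 0 • T (e 0) + e.repr x 1 • (ℓ • e 1)
      + e.repr x 2 • T (e 2) + e.repr x 3 • T (e 3) := by
    intro x
    conv_lhs => rw [hrepr x]
    rw [map_add, map_add, map_add, map_smul, map_smul, map_smul, map_smul, hℓ]
  -- membership characterization of W
  have hmemW : ∀ x : Fin 4 → ℂ, x ∈ W ↔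
      (e.repr x 3 = 0 ∧ e.repr x 0 * p 2 + e.repr x 2 * q 2 = 0) := by
    intro x
    rw [hW, Submodule.mem_map_equiv, LinearEquiv.symm_symm, hspan01 (T x)]
    have h3 : e.repr (T x) 3 = conj ℓ⁻¹ * e.repr x 3 := by
      have h := h13 x
      rw [hc1, hc1] at h
      linear_combination -h
    have h2 : -e.repr (T x) 2 = e.repr x 0 * -(p 2) + e.repr x 1 * (ℓ * 0)
        + e.repr x 2 * -(q 2) + e.repr x 3 * B (e 2) (T (e 3)) := by
      rw [← hc2 (T x), hTx x, hadd₂, hadd₂, hadd₂, hsmul₂, hsmul₂, hsmul₂, hsmul₂,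
        hsmul₂, g21, hc2 (T (e 0)), hc2 (T (e 2)), ← hp, ← hq]
    constructor
    · rintro ⟨h2x, h3x⟩
      have hd : e.repr x 3 = 0 := by
        rw [h3x] at h3
        exact ((mul_eq_zero.mp h3.symm).resolve_left hℓc)
      refine ⟨hd, ?_⟩
      rw [h2x, hd] at h2
      linear_combination h2
    · rintro ⟨hd, hcc⟩
      rw [hd] at h3 h2
      constructor
      · linear_combination -h2 + hcc
      · rw [h3, mul_zero]
  -- the distinguished vector
  set c0 : ℂ := -(p 2) / q 2 with hc0def
  have hc00 : c0 ≠ 0 := div_ne_zero (neg_ne_zero.mpr hp2) hq2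
  set w : Fin 4 → ℂ := e 0 + c0 • e 2 with hwdef
  -- coordinates of e 0 + c • e 2
  have hreprw : ∀ c : ℂ, e.repr (e 0 + c • e 2) 0 = 1 ∧ e.repr (e 0 + c • e 2) 2 = c
      ∧ e.repr (e 0 + c • e 2) 3 = 0 := by
    intro c
    refine ⟨?_, ?_, ?_⟩
    · have h := hc0 (e 0 + c • e 2)
      rw [hadd₂, hsmul₂, g00, g02] at h
      linear_combination -h
    · have h := hc2 (e 0 + c • e 2)
      rw [hadd₂, hsmul₂, g20, g22] at h
      linear_combination h
    · have h := hc1 (e 0 + c • e 2)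
      rw [hadd₂, hsmul₂, g10, g12] at h
      linear_combination h
  have hwW : w ∈ W := by
    rw [hmemW]
    obtain ⟨ha, hb, hc⟩ := hreprw c0
    rw [hwdef] at *
    refine ⟨hc, ?_⟩
    rw [ha, hb, hc0def]
    field_simp
    ring
  -- e 1 coordinates
  have he1r : e.repr (e 1) 0 = 0 ∧ e.repr (e 1) 2 = 0 ∧ e.repr (e 1) 3 = 0 := by
    refine ⟨?_, ?_, ?_⟩
    · have h := hc0 (e 1); rw [g01] at h; linear_combination -h
    · have h := hc2 (e 1); rw [g21] at h; linear_combination h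
    · have h := hc1 (e 1); rw [g11] at h; linear_combination h
  have he1W : e 1 ∈ W := by
    rw [hmemW]
    rw [he1r.1, he1r.2.1, he1r.2.2]
    simp
  -- span equality
  have hWspan : W = Submodule.span ℂ ({e 1, w} : Set (Fin 4 → ℂ)) := by
    apply le_antisymm
    · intro x hx
      obtain ⟨hd, hcc⟩ := (hmemW x).mp hx
      rw [Submodule.mem_span_pair]
      refine ⟨e.repr x 1, e.repr x 0, ?_⟩
      have hcx : e.repr x 2 = e.repr x 0 * c0 := by
        rw [hc0def]
        field_simp
        linear_combination hcc
      conv_rhs => rw [hrepr x]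
      rw [hcx, hd, zero_smul, add_zero, hwdef]
      module
    · rw [Submodule.span_le]
      rintro y (rfl | rfl)
      · exact he1W
      · exact hwW
  refine ⟨?_, ⟨w, ⟨hwW, ⟨c0, hc00, hwdef⟩, hWspan⟩, ?_⟩⟩
  · intro x hx
    obtain ⟨hd, -⟩ := (hmemW x).mp hx
    have hx4 := hrepr x
    rw [hd, zero_smul, add_zero] at hx4
    rw [hx4]
    refine add_mem (add_mem ?_ ?_) ?_ <;>
      exact Submodule.smul_mem _ _ (Submodule.subset_span (by simp))
  · rintro w' ⟨hw'W, ⟨c', hc', rfl⟩, -⟩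
    obtain ⟨ha, hb, hc⟩ := hreprw c'
    obtain ⟨-, hcond⟩ := (hmemW _).mp hw'W
    rw [ha, hb, one_mul] at hcond
    have : c' = c0 := by
      rw [hc0def]
      field_simp
      linear_combination hcond
    rw [this, hwdef]
end

section
/- In the resonant case (T flux-unitary with respect to the frozen-mode Gram matrix and T e₀ = ℓ e₀), the following conditions are equivalent: (i) [e₊, T e₁] ≠ 0; (ii) [e₊, T⁻¹ e₁] ≠ 0; (iii) T[span{e₊,e₀}] ≠ span{e₊,e₀}; (iv) T[span{e₀,e₁}] ≠ span{e₀,e₁}. -/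
open scoped ComplexConjugate

/-- In the resonant case (`T e₀ = ℓ e₀`, `ℓ ≠ 0`), the conditions
`[e₊, T e₁] ≠ 0`, `[e₊, T⁻¹ e₁] ≠ 0`, `T[span{e₊,e₀}] ≠ span{e₊,e₀}`, and
`T[span{e₀,e₁}] ≠ span{e₀,e₁}` are equivalent.  Basis convention:
`e 0 = e₊`, `e 1 = e₀`, `e 2 = e₁`, `e 3 = e₂`. -/
theorem stmt_13
    (B : (Fin 4 → ℂ) → (Fin 4 → ℂ) → ℂ)
    (hadd₁ : ∀ x y z, B (x + y) z = B x z + B y z)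
    (hadd₂ : ∀ x y z, B x (y + z) = B x y + B x z)
    (hsmul₁ : ∀ (c : ℂ) (x y), B (c • x) y = conj c * B x y)
    (hsmul₂ : ∀ (c : ℂ) (x y), B x (c • y) = c * B x y)
    (e : Module.Basis (Fin 4) ℂ (Fin 4 → ℂ))
    (hG : ∀ i j, B (e i) (e j) =
      !![(1:ℂ),0,0,0; 0,0,0,-1; 0,0,-1,0; 0,-1,0,0] i j)
    (T : (Fin 4 → ℂ) ≃ₗ[ℂ] (Fin 4 → ℂ))
    (hT : ∀ x y, B (T x) (T y) = B x y)
    (ℓ : ℂ) (hℓ0 : ℓ ≠ 0) (hℓ : T (e 1) = ℓ • e 1) :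
    [B (e 0) (T (e 2)) ≠ 0,
     B (e 0) (T.symm (e 2)) ≠ 0,
     (Submodule.span ℂ ({e 0, e 1} : Set (Fin 4 → ℂ))).map T.toLinearMap
       ≠ Submodule.span ℂ ({e 0, e 1} : Set (Fin 4 → ℂ)),
     (Submodule.span ℂ ({e 1, e 2} : Set (Fin 4 → ℂ))).map T.toLinearMap
       ≠ Submodule.span ℂ ({e 1, e 2} : Set (Fin 4 → ℂ))].TFAE := by
  have hB0₁ : ∀ z, B 0 z = 0 := fun z => by simpa using hsmul₁ 0 0 z
  have hB0₂ : ∀ z, B z 0 = 0 := fun z => by simpa using hsmul₂ 0 z 0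
  have hsum₁ : ∀ (f : Fin 4 → (Fin 4 → ℂ)) (z), B (∑ i, f i) z = ∑ i, B (f i) z := by
    intro f z
    have key : ∀ s : Finset (Fin 4), B (∑ i ∈ s, f i) z = ∑ i ∈ s, B (f i) z := by
      intro s
      induction s using Finset.induction with
      | empty => simpa using hB0₁ z
      | @insert _ _ h ih => rw [Finset.sum_insert h, Finset.sum_insert h, hadd₁, ih]
    exact key _
  have hsum₂ : ∀ (z) (f : Fin 4 → (Fin 4 → ℂ)), B z (∑ i, f i) = ∑ i, B z (f i) := by
    intro z f
    have key : ∀ s : Finset (Fin 4), B z (∑ i ∈ s, f i) = ∑ i ∈ s, B z (f i) := by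
      intro s
      induction s using Finset.induction with
      | empty => simpa using hB0₂ z
      | @insert _ _ h ih => rw [Finset.sum_insert h, Finset.sum_insert h, hadd₂, ih]
    exact key _
  -- full expansion of B in coordinates
  have hexp : ∀ x y, B x y = conj (e.repr x 0) * (e.repr y 0)
      - conj (e.repr x 1) * (e.repr y 3) - conj (e.repr x 2) * (e.repr y 2)
      - conj (e.repr x 3) * (e.repr y 1) := by
    intro x y
    have h1 : B x y = ∑ i, ∑ j, conj (e.repr x i) * (e.repr y j * B (e i) (e j)) := by
      conv_lhs => rw [← e.sum_repr x, ← e.sum_repr y]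
      rw [hsum₁]
      refine Finset.sum_congr rfl fun i _ => ?_
      rw [hsmul₁, hsum₂, Finset.mul_sum]
      refine Finset.sum_congr rfl fun j _ => ?_
      rw [hsmul₂]
    rw [h1, Fin.sum_univ_four, Fin.sum_univ_four, Fin.sum_univ_four, Fin.sum_univ_four,
      Fin.sum_univ_four]
    simp only [hG]
    norm_num [Matrix.vecHead, Matrix.vecTail, Matrix.cons_val_two, Matrix.cons_val_three]
    ring
  have hrepr : ∀ i j : Fin 4, e.repr (e i) j = if i = j then 1 else 0 := by
    intro i j; simp [Module.Basis.repr_self, Finsupp.single_apply]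
  -- pairing against basis vectors
  have hB0y : ∀ y, B (e 0) y = e.repr y 0 := by
    intro y; rw [hexp]; simp [hrepr]
  have hBy1 : ∀ x, B x (e 1) = -conj (e.repr x 3) := by
    intro x; rw [hexp]; simp [hrepr]
  have hBy2 : ∀ x, B x (e 2) = -conj (e.repr x 2) := by
    intro x; rw [hexp]; simp [hrepr]
  have hB1y : ∀ y, B (e 1) y = -(e.repr y 3) := by
    intro y; rw [hexp]; simp [hrepr]
  -- a 3 = 0
  have ha3 : e.repr (T (e 0)) 3 = 0 := by
    have h := hT (e 0) (e 1)
    rw [hℓ, hsmul₂, hBy1, hBy1] at h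
    simp [hrepr] at h
    rcases h with h | h
    · exact absurd h hℓ0
    · exact h
  have hw3 : e.repr (T (e 2)) 3 = 0 := by
    have h := hT (e 1) (e 2)
    rw [hℓ, hsmul₁, hB1y, hB1y] at h
    simp [hrepr] at h
    rcases h with h | h
    · exact absurd h hℓ0
    · exact h
  have hnorm0 : conj (e.repr (T (e 0)) 0) * (e.repr (T (e 0)) 0)
      - conj (e.repr (T (e 0)) 2) * (e.repr (T (e 0)) 2) = 1 := by
    have h := hT (e 0) (e 0)
    rw [hexp, hB0y, ha3] at h
    simp [hrepr] at h
    linear_combination h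
  have hnorm2 : conj (e.repr (T (e 2)) 0) * (e.repr (T (e 2)) 0)
      - conj (e.repr (T (e 2)) 2) * (e.repr (T (e 2)) 2) = -1 := by
    have h := hT (e 2) (e 2)
    rw [hexp, hBy2, hw3] at h
    simp [hrepr] at h
    linear_combination h
  have horth : conj (e.repr (T (e 0)) 0) * (e.repr (T (e 2)) 0)
      = conj (e.repr (T (e 0)) 2) * (e.repr (T (e 2)) 2) := by
    have h := hT (e 0) (e 2)
    rw [hexp, hBy2, ha3, hw3] at h
    simp [hrepr] at h
    linear_combination h
  -- key scalar equivalence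
  have hkey : e.repr (T (e 2)) 0 ≠ 0 ↔ e.repr (T (e 0)) 2 ≠ 0 := by
    constructor
    · intro hw0 ha2
      rw [ha2] at horth hnorm0
      simp only [map_zero, zero_mul, mul_zero, sub_zero] at horth hnorm0
      have h0 : conj (e.repr (T (e 0)) 0) ≠ 0 := fun h => by
        rw [h, zero_mul] at hnorm0; exact one_ne_zero hnorm0.symm
      exact hw0 ((mul_eq_zero.mp horth).resolve_left h0)
    · intro ha2 hw0
      rw [hw0] at horth hnorm2
      simp only [map_zero, zero_mul, mul_zero, zero_sub] at horth hnorm2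
      have hw2 : e.repr (T (e 2)) 2 ≠ 0 := fun h => by
        rw [h, mul_zero, neg_zero] at hnorm2
        exact one_ne_zero (neg_eq_zero.mp hnorm2.symm)
      have : conj (e.repr (T (e 0)) 2) = 0 :=
        (mul_eq_zero.mp horth.symm).resolve_right hw2
      exact ha2 (star_eq_zero.mp this)
  -- values of the pairings in the statement
  have hval1 : B (e 0) (T (e 2)) = e.repr (T (e 2)) 0 := hB0y _
  have hval2 : B (e 0) (T.symm (e 2)) = -conj (e.repr (T (e 0)) 2) := by
    have h := hT (e 0) (T.symm (e 2))
    rw [T.apply_symm_apply] at h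
    rw [← h, hBy2]
  -- coordinate vanishing on the spans
  set W : Submodule ℂ (Fin 4 → ℂ) := Submodule.span ℂ ({e 0, e 1} : Set (Fin 4 → ℂ)) with hWdef
  set W' : Submodule ℂ (Fin 4 → ℂ) := Submodule.span ℂ ({e 1, e 2} : Set (Fin 4 → ℂ)) with hW'def
  have hcoordW : ∀ x ∈ W, e.repr x 2 = 0 := by
    intro x hx
    induction hx using Submodule.span_induction with
    | mem x hx => rcases hx with h | h <;> subst h <;> simp [hrepr]
    | zero => simp
    | add x y _ _ hx hy => simp [hx, hy]
    | smul c x _ hx => simp [hx]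
  have hcoordW' : ∀ x ∈ W', e.repr x 0 = 0 := by
    intro x hx
    induction hx using Submodule.span_induction with
    | mem x hx => rcases hx with h | h <;> subst h <;> simp [hrepr]
    | zero => simp
    | add x y _ _ hx hy => simp [hx, hy]
    | smul c x _ hx => simp [hx]
  have he0W : e 0 ∈ W := Submodule.subset_span (Set.mem_insert _ _)
  have he1W : e 1 ∈ W := Submodule.subset_span (Set.mem_insert_of_mem _ rfl)
  have he1W' : e 1 ∈ W' := Submodule.subset_span (Set.mem_insert _ _)
  have he2W' : e 2 ∈ W' := Submodule.subset_span (Set.mem_insert_of_mem _ rfl)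
  -- (iii) ↔ a 2 ≠ 0
  have hiiifwd : e.repr (T (e 0)) 2 = 0 → W.map T.toLinearMap = W := by
    intro ha2
    have hTe0 : T (e 0) = e.repr (T (e 0)) 0 • e 0 + e.repr (T (e 0)) 1 • e 1 := by
      have hs := e.sum_repr (T (e 0))
      rw [Fin.sum_univ_four, ha2, ha3] at hs
      simpa using hs.symm
    have hle : W.map T.toLinearMap ≤ W := by
      rw [hWdef, Submodule.map_span, Set.image_pair]
      apply Submodule.span_le.mpr
      rintro x (h | h)
      · subst h
        rw [LinearEquiv.coe_coe, hTe0]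
        exact Submodule.add_mem _ (Submodule.smul_mem _ _ he0W) (Submodule.smul_mem _ _ he1W)
      · simp only [Set.mem_singleton_iff] at h
        subst h
        rw [LinearEquiv.coe_coe, hℓ]
        exact Submodule.smul_mem _ _ he1W
    exact Submodule.eq_of_le_of_finrank_eq hle (LinearEquiv.finrank_map_eq T W)
  have hiii : W.map T.toLinearMap ≠ W ↔ e.repr (T (e 0)) 2 ≠ 0 := by
    constructor
    · exact fun hne => mt hiiifwd hne
    · intro ha2 heq
      exact ha2 (hcoordW _ (heq ▸ Submodule.mem_map_of_mem he0W))
  -- (iv) ↔ w 0 ≠ 0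
  have hivfwd : e.repr (T (e 2)) 0 = 0 → W'.map T.toLinearMap = W' := by
    intro hw0
    have hTe2 : T (e 2) = e.repr (T (e 2)) 1 • e 1 + e.repr (T (e 2)) 2 • e 2 := by
      have hs := e.sum_repr (T (e 2))
      rw [Fin.sum_univ_four, hw0, hw3] at hs
      simpa using hs.symm
    have hle : W'.map T.toLinearMap ≤ W' := by
      rw [hW'def, Submodule.map_span, Set.image_pair]
      apply Submodule.span_le.mpr
      rintro x (h | h)
      · subst h
        rw [LinearEquiv.coe_coe, hℓ]
        exact Submodule.smul_mem _ _ he1W'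
      · simp only [Set.mem_singleton_iff] at h
        subst h
        rw [LinearEquiv.coe_coe, hTe2]
        exact Submodule.add_mem _ (Submodule.smul_mem _ _ he1W') (Submodule.smul_mem _ _ he2W')
    exact Submodule.eq_of_le_of_finrank_eq hle (LinearEquiv.finrank_map_eq T W')
  have hiv : W'.map T.toLinearMap ≠ W' ↔ e.repr (T (e 2)) 0 ≠ 0 := by
    constructor
    · exact fun hne => mt hivfwd hne
    · intro hw0 heq
      exact hw0 (hcoordW' _ (heq ▸ Submodule.mem_map_of_mem he2W'))
  tfae_have 1 ↔ 2 := by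
    rw [hval1, hval2, hkey]
    simp [ne_eq, neg_eq_zero]
  tfae_have 1 ↔ 3 := by rw [hval1, hkey]; exact hiii.symm
  tfae_have 1 ↔ 4 := by rw [hval1]; exact hiv.symm
  tfae_finish
end

section
/- Let M(z) = Σₙ₌₀^∞ Mₙ zⁿ be a 2×2 matrix power series and b(z) = Σₙ₌₁^∞ bₙ zⁿ a vector power series, both with positive radius of convergence. Suppose M₀ is nonzero and noninvertible with null space spanned by s and range spanned by r, and assume: sᵀr = 0, sᵀb₁ = 0, sᵀM₁s = 0, and the 2×2 matrix 𝓜₀ = [[sᵀM₂s, sᵀM₁r],[rᵀM₁s, rᵀM₀r]] is invertible. Then the equation M(z) t(z) = b(z) admits a formal power series solution t(z) = Σₙ₌₀^∞ tₙ zⁿ with positive radius of convergence and with t₀ ∈ span{s}. -/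
open Matrix


private lemma dot_sum (v : Fin 2 → ℂ) (S : Finset ℕ) (f : ℕ → Fin 2 → ℂ) :
    v ⬝ᵥ ∑ i ∈ S, f i = ∑ i ∈ S, v ⬝ᵥ f i := by
  simp only [dotProduct, Finset.sum_apply, Finset.mul_sum]
  rw [Finset.sum_comm]

/-- the recursion step function: given history `f k = (x k, y (k+1))` for `k < n`,
produce `(x n, y (n+1))`. -/
noncomputable def Gfun (M : ℕ → Matrix (Fin 2) (Fin 2) ℂ) (b : ℕ → Fin 2 → ℂ)
    (s r : Fin 2 → ℂ) (Ei : Matrix (Fin 2) (Fin 2) ℂ) (n : ℕ) (f : ℕ → ℂ × ℂ) : ℂ × ℂ :=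
  let y : ℕ → ℂ := fun k => if k = 0 then 0 else (f (k - 1)).2
  let t : ℕ → Fin 2 → ℂ := fun k => (f k).1 • s + y k • r
  let F1 : ℂ := s ⬝ᵥ b (n+2) - y n * (s ⬝ᵥ (M 2).mulVec r)
      - ∑ l ∈ Finset.Icc 3 (n+2), s ⬝ᵥ (M l).mulVec (t (n+2-l))
  let F2 : ℂ := r ⬝ᵥ b (n+1) - y n * (r ⬝ᵥ (M 1).mulVec r)
      - ∑ l ∈ Finset.Icc 2 (n+1), r ⬝ᵥ (M l).mulVec (t (n+1-l))
  (Ei.mulVec ![F1, F2] 0, Ei.mulVec ![F1, F2] 1)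

noncomputable def hist (M : ℕ → Matrix (Fin 2) (Fin 2) ℂ) (b : ℕ → Fin 2 → ℂ)
    (s r : Fin 2 → ℂ) (Ei : Matrix (Fin 2) (Fin 2) ℂ) : ℕ → ℕ → ℂ × ℂ
  | 0 => fun _ => (0, 0)
  | n+1 => Function.update (hist M b s r Ei n) n (Gfun M b s r Ei n (hist M b s r Ei n))

noncomputable def uu (M : ℕ → Matrix (Fin 2) (Fin 2) ℂ) (b : ℕ → Fin 2 → ℂ)
    (s r : Fin 2 → ℂ) (Ei : Matrix (Fin 2) (Fin 2) ℂ) (n : ℕ) : ℂ × ℂ :=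
  hist M b s r Ei (n+1) n

noncomputable def xx (M : ℕ → Matrix (Fin 2) (Fin 2) ℂ) (b : ℕ → Fin 2 → ℂ)
    (s r : Fin 2 → ℂ) (Ei : Matrix (Fin 2) (Fin 2) ℂ) (n : ℕ) : ℂ :=
  (uu M b s r Ei n).1

noncomputable def yy (M : ℕ → Matrix (Fin 2) (Fin 2) ℂ) (b : ℕ → Fin 2 → ℂ)
    (s r : Fin 2 → ℂ) (Ei : Matrix (Fin 2) (Fin 2) ℂ) (n : ℕ) : ℂ :=
  if n = 0 then 0 else (uu M b s r Ei (n-1)).2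

noncomputable def tt (M : ℕ → Matrix (Fin 2) (Fin 2) ℂ) (b : ℕ → Fin 2 → ℂ)
    (s r : Fin 2 → ℂ) (Ei : Matrix (Fin 2) (Fin 2) ℂ) (n : ℕ) : Fin 2 → ℂ :=
  xx M b s r Ei n • s + yy M b s r Ei n • r

private lemma Gfun_congr {M : ℕ → Matrix (Fin 2) (Fin 2) ℂ} {b : ℕ → Fin 2 → ℂ}
    {s r : Fin 2 → ℂ} {Ei : Matrix (Fin 2) (Fin 2) ℂ} {n : ℕ} {f g : ℕ → ℂ × ℂ}
    (h : ∀ k < n, f k = g k) : Gfun M b s r Ei n f = Gfun M b s r Ei n g := by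
  have hy : ∀ k ≤ n, k ≠ 0 → (f (k-1)).2 = (g (k-1)).2 := by
    intro k hk hk0; rw [h _ (by omega)]
  have ht : ∀ k < n, ((f k).1 • s + (if k = 0 then (0:ℂ) else (f (k-1)).2) • r)
      = ((g k).1 • s + (if k = 0 then (0:ℂ) else (g (k-1)).2) • r) := by
    intro k hk
    rw [h _ hk]
    rcases Nat.eq_zero_or_pos k with h0 | h0
    · simp [h0]
    · rw [if_neg (by omega), if_neg (by omega), hy k (by omega) (by omega)]
  simp only [Gfun]
  have hyn : (if n = 0 then (0:ℂ) else (f (n-1)).2) = (if n = 0 then 0 else (g (n-1)).2) := by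
    rcases Nat.eq_zero_or_pos n with h0 | h0
    · simp [h0]
    · rw [if_neg (by omega), if_neg (by omega), hy n le_rfl (by omega)]
  have hs1 : ∑ l ∈ Finset.Icc 3 (n+2),
        s ⬝ᵥ (M l).mulVec ((f (n+2-l)).1 • s + (if n+2-l = 0 then (0:ℂ) else (f (n+2-l-1)).2) • r)
      = ∑ l ∈ Finset.Icc 3 (n+2),
        s ⬝ᵥ (M l).mulVec ((g (n+2-l)).1 • s + (if n+2-l = 0 then (0:ℂ) else (g (n+2-l-1)).2) • r) := by
    refine Finset.sum_congr rfl ?_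
    intro l hl
    rw [Finset.mem_Icc] at hl
    rw [ht (n+2-l) (by omega)]
  have hs2 : ∑ l ∈ Finset.Icc 2 (n+1),
        r ⬝ᵥ (M l).mulVec ((f (n+1-l)).1 • s + (if n+1-l = 0 then (0:ℂ) else (f (n+1-l-1)).2) • r)
      = ∑ l ∈ Finset.Icc 2 (n+1),
        r ⬝ᵥ (M l).mulVec ((g (n+1-l)).1 • s + (if n+1-l = 0 then (0:ℂ) else (g (n+1-l-1)).2) • r) := by
    refine Finset.sum_congr rfl ?_
    intro l hl
    rw [Finset.mem_Icc] at hl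
    rw [ht (n+1-l) (by omega)]
  rw [hyn, hs1, hs2]

private lemma hist_eq_uu (M : ℕ → Matrix (Fin 2) (Fin 2) ℂ) (b : ℕ → Fin 2 → ℂ)
    (s r : Fin 2 → ℂ) (Ei : Matrix (Fin 2) (Fin 2) ℂ) :
    ∀ m k, k < m → hist M b s r Ei m k = uu M b s r Ei k := by
  intro m
  induction m with
  | zero => intro k hk; omega
  | succ n ih =>
    intro k hk
    rcases Nat.lt_or_ge k n with h | h
    · have : hist M b s r Ei (n+1) k = hist M b s r Ei n k := by
        simp only [hist, Function.update]
        rw [dif_neg (by omega)]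
      rw [this, ih k h]
    · have hkn : k = n := by omega
      subst hkn
      rfl

private lemma uu_eq (M : ℕ → Matrix (Fin 2) (Fin 2) ℂ) (b : ℕ → Fin 2 → ℂ)
    (s r : Fin 2 → ℂ) (Ei : Matrix (Fin 2) (Fin 2) ℂ) (n : ℕ) :
    uu M b s r Ei n = Gfun M b s r Ei n (uu M b s r Ei) := by
  have : uu M b s r Ei n = Gfun M b s r Ei n (hist M b s r Ei n) := by
    show hist M b s r Ei (n+1) n = _
    simp only [hist, Function.update]
    simp
  rw [this]
  exact Gfun_congr (fun k hk => hist_eq_uu M b s r Ei n k hk)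

private lemma split3 (m : ℕ) (f : ℕ → ℂ) :
    ∑ l ∈ Finset.range (m+2+1), f l = f 0 + f 1 + f 2 + ∑ l ∈ Finset.Icc 3 (m+2), f l := by
  rw [← Finset.Ico_add_one_right_eq_Icc 3 (m+2), Finset.range_eq_Ico,
    ← Finset.sum_Ico_consecutive f (by omega : 0 ≤ 3) (by omega : 3 ≤ m+2+1)]
  congr 1
  rw [← Finset.range_eq_Ico]
  simp [Finset.sum_range_succ]

private lemma split2 (m : ℕ) (f : ℕ → ℂ) :
    ∑ l ∈ Finset.range (m+1+1), f l = f 0 + f 1 + ∑ l ∈ Finset.Icc 2 (m+1), f l := by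
  rw [← Finset.Ico_add_one_right_eq_Icc 2 (m+1), Finset.range_eq_Ico,
    ← Finset.sum_Ico_consecutive f (by omega : 0 ≤ 2) (by omega : 2 ≤ m+1+1)]
  congr 1
  rw [← Finset.range_eq_Ico]
  simp [Finset.sum_range_succ]


private lemma geom_two (x : ℝ) (h0 : 0 ≤ x) (h1 : x ≤ 1/2) :
    ∀ m, ∑ j ∈ Finset.range m, x^j ≤ 2 := by
  intro m
  induction m with
  | zero => norm_num
  | succ n ih =>
    rw [geom_sum_succ]
    have hS : 0 ≤ ∑ i ∈ Finset.range n, x ^ i :=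
      Finset.sum_nonneg fun i _ => pow_nonneg h0 i
    nlinarith

private lemma sum_bound_real (A R ρ Q : ℝ) (hA : 0 ≤ A) (hQ : 0 ≤ Q) (hρ0 : 0 < ρ)
    (hR1 : 1 ≤ R) (hρR : 2 ≤ ρ*R) (n : ℕ) (g : ℕ → ℝ)
    (hgb : ∀ j, j < n → g j ≤ 2*A*R^j) :
    ∑ j ∈ Finset.range n, (Q/ρ^(3+j)) * g (n-1-j) ≤ 4*A*Q*R^n/(ρ^3*R) := by
  have hR0 : (0:ℝ) < R := lt_of_lt_of_le one_pos hR1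
  have h1 : ∀ j ∈ Finset.range n, (Q/ρ^(3+j)) * g (n-1-j)
      ≤ (2*A*Q*R^n/(ρ^3*R)) * (1/(ρ*R))^j := by
    intro j hj
    rw [Finset.mem_range] at hj
    have hle : g (n-1-j) ≤ 2*A*R^(n-1-j) := hgb _ (by omega)
    have e1 : R^(n-1-j) * R^(1+j) = R^n := by
      rw [show n-1-j = n - (1+j) by omega]
      exact pow_sub_mul_pow R (by omega)
    have e2 : (2*A*Q*R^n/(ρ^3*R)) * (1/(ρ*R))^j = (Q/ρ^(3+j)) * (2*A*R^(n-1-j)) := by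
      rw [← e1, div_pow, one_pow, mul_pow, pow_add, pow_add]
      field_simp
    rw [e2]
    exact mul_le_mul_of_nonneg_left hle (by positivity)
  calc ∑ j ∈ Finset.range n, (Q/ρ^(3+j)) * g (n-1-j)
      ≤ ∑ j ∈ Finset.range n, (2*A*Q*R^n/(ρ^3*R)) * (1/(ρ*R))^j := Finset.sum_le_sum h1
    _ = (2*A*Q*R^n/(ρ^3*R)) * ∑ j ∈ Finset.range n, (1/(ρ*R))^j := by rw [Finset.mul_sum]
    _ ≤ (2*A*Q*R^n/(ρ^3*R)) * 2 := by
        refine mul_le_mul_of_nonneg_left (geom_two _ (by positivity) ?_ n) (by positivity)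
        rw [div_le_div_iff₀ (by positivity) (by norm_num)]
        linarith
    _ = 4*A*Q*R^n/(ρ^3*R) := by ring

private lemma sep_lemma (s r : Fin 2 → ℂ)
    (hdet : (s 0 * r 1 - s 1 * r 0) ≠ 0) :
    ∀ v : Fin 2 → ℂ, s ⬝ᵥ v = 0 → r ⬝ᵥ v = 0 → v = 0 := by
  intro v h1 h2
  set A : Matrix (Fin 2) (Fin 2) ℂ := !![s 0, s 1; r 0, r 1] with hA
  have hdetA : IsUnit A.det := by
    rw [hA, det_fin_two_of]; exact isUnit_iff_ne_zero.mpr hdet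
  have hAv : A.mulVec v = 0 := by
    funext i
    fin_cases i
    · simpa [hA, mulVec, dotProduct, Fin.sum_univ_two] using h1
    · simpa [hA, mulVec, dotProduct, Fin.sum_univ_two] using h2
  calc v = (1 : Matrix (Fin 2) (Fin 2) ℂ) *ᵥ v := (one_mulVec v).symm
    _ = (A⁻¹ * A) *ᵥ v := by rw [nonsing_inv_mul A hdetA]
    _ = A⁻¹ *ᵥ (A *ᵥ v) := by rw [mulVec_mulVec]
    _ = A⁻¹ *ᵥ 0 := by rw [hAv]
    _ = 0 := mulVec_zero _

-- independence: if s0 r1 - s1 r0 = 0 and s ≠ 0 then r = c • s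
private lemma prop_lemma (s r : Fin 2 → ℂ) (hs : s ≠ 0)
    (hcol : s 0 * r 1 - s 1 * r 0 = 0) : ∃ c : ℂ, r = c • s := by
  by_cases h0 : s 0 ≠ 0
  · refine ⟨r 0 / s 0, ?_⟩
    funext i
    fin_cases i
    · simp [div_mul_cancel₀, h0]
    · show r 1 = (r 0 / s 0) * s 1
      rw [div_mul_eq_mul_div, eq_div_iff h0]
      linear_combination hcol
  · push_neg at h0
    have h1 : s 1 ≠ 0 := by
      intro h1
      apply hs; funext i; fin_cases i <;> simp [h0, h1]
    refine ⟨r 1 / s 1, ?_⟩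
    funext i
    fin_cases i
    · show r 0 = (r 1 / s 1) * s 0
      rw [div_mul_eq_mul_div, eq_div_iff h1]
      linear_combination -hcol
    · simp [div_mul_cancel₀, h1]


set_option maxHeartbeats 2000000 in
/-- Lemma 3.7 of the paper: existence of a convergent power-series solution
`t(z)` of `M(z) t(z) = b(z)` with `t₀ ∈ span{s}`.  Power series are encoded by
their coefficient sequences; positive radius of convergence is encoded by a
geometric bound on the coefficients, and the equation `M(z)t(z) = b(z)` by the
Cauchy-product recurrence on coefficients. -/
theorem stmt_14 (M : ℕ → Matrix (Fin 2) (Fin 2) ℂ) (b : ℕ → Fin 2 → ℂ)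
    (s r : Fin 2 → ℂ) (hs : s ≠ 0) (hr : r ≠ 0)
    (hMconv : ∃ C ρ : ℝ, 0 < ρ ∧ ∀ n i j, ‖M n i j‖ ≤ C / ρ ^ n)
    (hbconv : ∃ C ρ : ℝ, 0 < ρ ∧ ∀ n i, ‖b n i‖ ≤ C / ρ ^ n)
    (hb0 : b 0 = 0)
    (hM0ne : M 0 ≠ 0)
    (hnull : ∀ v, (M 0).mulVec v = 0 ↔ ∃ c : ℂ, v = c • s)
    (hran : ∀ v, (∃ u, (M 0).mulVec u = v) ↔ ∃ c : ℂ, v = c • r)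
    (hsr : s ⬝ᵥ r = 0)
    (hsb1 : s ⬝ᵥ b 1 = 0)
    (hsM1s : s ⬝ᵥ (M 1).mulVec s = 0)
    (hM0inv : (!![s ⬝ᵥ (M 2).mulVec s, s ⬝ᵥ (M 1).mulVec r;
                 r ⬝ᵥ (M 1).mulVec s, r ⬝ᵥ (M 0).mulVec r]).det ≠ 0) :
    ∃ t : ℕ → Fin 2 → ℂ,
      (∃ C ρ : ℝ, 0 < ρ ∧ ∀ n i, ‖t n i‖ ≤ C / ρ ^ n) ∧
      (∀ n, ∑ l ∈ Finset.range (n + 1), (M l).mulVec (t (n - l)) = b n) ∧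
      (∃ c : ℂ, t 0 = c • s) := by
  -- basic structural facts
  have hM0s : (M 0) *ᵥ s = 0 := (hnull s).mpr ⟨1, (one_smul ℂ s).symm⟩
  have hsM0 : ∀ v, s ⬝ᵥ (M 0) *ᵥ v = 0 := by
    intro v
    obtain ⟨c, hc⟩ := (hran ((M 0) *ᵥ v)).mp ⟨v, rfl⟩
    rw [hc]
    simp [hsr]
  have hind : s 0 * r 1 - s 1 * r 0 ≠ 0 := by
    intro hcol
    obtain ⟨c, hc⟩ := prop_lemma s r hs hcol
    apply hM0inv
    have h1 : r ⬝ᵥ (M 0) *ᵥ r = 0 := by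
      rw [hc, mulVec_smul, hM0s]
      simp
    have h2 : s ⬝ᵥ (M 1) *ᵥ r = 0 := by
      rw [hc, mulVec_smul]
      rw [dotProduct_smul, hsM1s, smul_zero]
    rw [det_fin_two_of, h1, h2]
    ring
  have sep := sep_lemma s r hind
  set E : Matrix (Fin 2) (Fin 2) ℂ := !![s ⬝ᵥ (M 2).mulVec s, s ⬝ᵥ (M 1).mulVec r;
                 r ⬝ᵥ (M 1).mulVec s, r ⬝ᵥ (M 0).mulVec r] with hEdef
  have hE : IsUnit E.det := isUnit_iff_ne_zero.mpr hM0inv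
  set X : ℕ → ℂ := xx M b s r E⁻¹ with hXdef
  set Y : ℕ → ℂ := yy M b s r E⁻¹ with hYdef
  set T : ℕ → Fin 2 → ℂ := tt M b s r E⁻¹ with hTdef
  have hT : ∀ k, T k = X k • s + Y k • r := fun k => rfl
  have hY0 : Y 0 = 0 := rfl
  have hYs : ∀ n, Y (n+1) = (uu M b s r E⁻¹ n).2 := fun n => rfl
  -- the linear system rows
  have hEE : ∀ v : Fin 2 → ℂ, E *ᵥ (E⁻¹ *ᵥ v) = v := by
    intro v
    rw [mulVec_mulVec, mul_nonsing_inv _ hE, one_mulVec]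
  have hvec : ∀ n, ![X n, Y (n+1)] =
      E⁻¹ *ᵥ ![s ⬝ᵥ b (n+2) - Y n * (s ⬝ᵥ (M 2).mulVec r)
                - ∑ l ∈ Finset.Icc 3 (n+2), s ⬝ᵥ (M l).mulVec (T (n+2-l)),
              r ⬝ᵥ b (n+1) - Y n * (r ⬝ᵥ (M 1).mulVec r)
                - ∑ l ∈ Finset.Icc 2 (n+1), r ⬝ᵥ (M l).mulVec (T (n+1-l))] := by
    intro n
    have h0 : X n = (Gfun M b s r E⁻¹ n (uu M b s r E⁻¹)).1 := by
      rw [hXdef]; show (uu M b s r E⁻¹ n).1 = _; rw [uu_eq]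
    have h1 : Y (n+1) = (Gfun M b s r E⁻¹ n (uu M b s r E⁻¹)).2 := by
      rw [hYs]; rw [uu_eq]
    funext i
    fin_cases i
    · show X n = _
      rw [h0]; rfl
    · show Y (n+1) = _
      rw [h1]; rfl
  have hrow1 : ∀ n, (s ⬝ᵥ (M 2).mulVec s) * X n + (s ⬝ᵥ (M 1).mulVec r) * Y (n+1)
      = s ⬝ᵥ b (n+2) - Y n * (s ⬝ᵥ (M 2).mulVec r)
        - ∑ l ∈ Finset.Icc 3 (n+2), s ⬝ᵥ (M l).mulVec (T (n+2-l)) := by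
    intro n
    have := congrFun (hEE ![s ⬝ᵥ b (n+2) - Y n * (s ⬝ᵥ (M 2).mulVec r)
                - ∑ l ∈ Finset.Icc 3 (n+2), s ⬝ᵥ (M l).mulVec (T (n+2-l)),
              r ⬝ᵥ b (n+1) - Y n * (r ⬝ᵥ (M 1).mulVec r)
                - ∑ l ∈ Finset.Icc 2 (n+1), r ⬝ᵥ (M l).mulVec (T (n+1-l))]) 0
    rw [← hvec n] at this
    simpa [hEdef, mulVec, dotProduct, Fin.sum_univ_two] using this
  have hrow2 : ∀ n, (r ⬝ᵥ (M 1).mulVec s) * X n + (r ⬝ᵥ (M 0).mulVec r) * Y (n+1)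
      = r ⬝ᵥ b (n+1) - Y n * (r ⬝ᵥ (M 1).mulVec r)
        - ∑ l ∈ Finset.Icc 2 (n+1), r ⬝ᵥ (M l).mulVec (T (n+1-l)) := by
    intro n
    have := congrFun (hEE ![s ⬝ᵥ b (n+2) - Y n * (s ⬝ᵥ (M 2).mulVec r)
                - ∑ l ∈ Finset.Icc 3 (n+2), s ⬝ᵥ (M l).mulVec (T (n+2-l)),
              r ⬝ᵥ b (n+1) - Y n * (r ⬝ᵥ (M 1).mulVec r)
                - ∑ l ∈ Finset.Icc 2 (n+1), r ⬝ᵥ (M l).mulVec (T (n+1-l))]) 1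
    rw [← hvec n] at this
    simpa [hEdef, mulVec, dotProduct, Fin.sum_univ_two] using this
  -- expansion of projections
  have hexp_s : ∀ l k, s ⬝ᵥ (M l).mulVec (T k)
      = X k * (s ⬝ᵥ (M l).mulVec s) + Y k * (s ⬝ᵥ (M l).mulVec r) := by
    intro l k
    rw [hT k, mulVec_add, mulVec_smul, mulVec_smul, dotProduct_add]
    simp only [dotProduct_smul, smul_eq_mul]
  have hexp_r : ∀ l k, r ⬝ᵥ (M l).mulVec (T k)
      = X k * (r ⬝ᵥ (M l).mulVec s) + Y k * (r ⬝ᵥ (M l).mulVec r) := by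
    intro l k
    rw [hT k, mulVec_add, mulVec_smul, mulVec_smul, dotProduct_add]
    simp only [dotProduct_smul, smul_eq_mul]
  -- the coefficient equations
  have heq : ∀ n, ∑ l ∈ Finset.range (n + 1), (M l).mulVec (T (n - l)) = b n := by
    intro n
    have hps : s ⬝ᵥ ∑ l ∈ Finset.range (n + 1), (M l).mulVec (T (n - l)) = s ⬝ᵥ b n := by
      rw [dot_sum]
      match n with
      | 0 => rw [Finset.sum_range_one, hsM0, hb0, dotProduct_zero]
      | 1 =>
        rw [Finset.sum_range_succ, Finset.sum_range_one, hsM0, hexp_s]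
        simp only [Nat.sub_self, hY0, hsM1s, hsb1]
        ring
      | (m+2) =>
        rw [split3 m (fun l => s ⬝ᵥ (M l).mulVec (T (m+2-l)))]
        have e0 : s ⬝ᵥ (M 0).mulVec (T (m+2-0)) = 0 := hsM0 _
        have e1 : s ⬝ᵥ (M 1).mulVec (T (m+2-1)) = Y (m+1) * (s ⬝ᵥ (M 1).mulVec r) := by
          rw [show m+2-1 = m+1 by omega, hexp_s, hsM1s]
          ring
        have e2 : s ⬝ᵥ (M 2).mulVec (T (m+2-2)) = X m * (s ⬝ᵥ (M 2).mulVec s) + Y m * (s ⬝ᵥ (M 2).mulVec r) := by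
          rw [show m+2-2 = m by omega, hexp_s]
        rw [e0, e1, e2]
        linear_combination hrow1 m
    have hpr : r ⬝ᵥ ∑ l ∈ Finset.range (n + 1), (M l).mulVec (T (n - l)) = r ⬝ᵥ b n := by
      rw [dot_sum]
      match n with
      | 0 =>
        rw [Finset.sum_range_one]
        rw [show (0:ℕ) - 0 = 0 from rfl, hT 0, hY0]
        rw [mulVec_add, mulVec_smul, mulVec_smul, hM0s, dotProduct_add]
        simp [hb0]
      | (m+1) =>
        rw [split2 m (fun l => r ⬝ᵥ (M l).mulVec (T (m+1-l)))]
        have e0 : r ⬝ᵥ (M 0).mulVec (T (m+1-0)) = Y (m+1) * (r ⬝ᵥ (M 0).mulVec r) := by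
          rw [show m+1-0 = m+1 from rfl, hT (m+1), mulVec_add, mulVec_smul, mulVec_smul, hM0s, dotProduct_add]
          simp only [smul_zero, dotProduct_zero, zero_add, dotProduct_smul, smul_eq_mul]
        have e1 : r ⬝ᵥ (M 1).mulVec (T (m+1-1)) = X m * (r ⬝ᵥ (M 1).mulVec s) + Y m * (r ⬝ᵥ (M 1).mulVec r) := by
          rw [show m+1-1 = m by omega, hexp_r]
        rw [e0, e1]
        linear_combination hrow2 m
    have hz := sep (∑ l ∈ Finset.range (n + 1), (M l).mulVec (T (n - l)) - b n)
      (by rw [dotProduct_sub, hps, sub_self]) (by rw [dotProduct_sub, hpr, sub_self])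
    exact sub_eq_zero.mp hz
  refine ⟨T, ?_, heq, ⟨X 0, by rw [hT 0, hY0]; simp⟩⟩
  -- ===================== convergence =====================
  obtain ⟨CM, ρM, hρM, hMc⟩ := hMconv
  obtain ⟨Cb, ρb, hρb, hbc⟩ := hbconv
  set ρ : ℝ := min (min ρM ρb) 1 with hρdef
  have hρ0 : (0:ℝ) < ρ := lt_min (lt_min hρM hρb) one_pos
  have hρne : ρ ≠ 0 := ne_of_gt hρ0
  have hρ1 : ρ ≤ 1 := min_le_right _ _
  set C : ℝ := max (max CM Cb) 1 with hCdef
  have hC1 : (1:ℝ) ≤ C := le_max_right _ _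
  have hC0 : (0:ℝ) ≤ C := by linarith
  have hMC : ∀ n i j, ‖M n i j‖ ≤ C / ρ^n := by
    intro n i j
    refine le_trans (hMc n i j) (div_le_div₀ hC0 (le_trans (le_max_left _ _) (le_max_left _ _))
      (pow_pos hρ0 n) (pow_le_pow_left₀ (le_of_lt hρ0) (le_trans (min_le_left _ _) (min_le_left _ _)) n))
  have hbC : ∀ n i, ‖b n i‖ ≤ C / ρ^n := by
    intro n i
    refine le_trans (hbc n i) (div_le_div₀ hC0 (le_trans (le_max_right _ _) (le_max_left _ _))
      (pow_pos hρ0 n) (pow_le_pow_left₀ (le_of_lt hρ0) (le_trans (min_le_left _ _) (min_le_right _ _)) n))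
  set sr : ℝ := ‖s 0‖ + ‖s 1‖ + ‖r 0‖ + ‖r 1‖ + 1 with hsrdef
  have hsr1 : (1:ℝ) ≤ sr := by
    have h1 := norm_nonneg (s 0); have h2 := norm_nonneg (s 1)
    have h3 := norm_nonneg (r 0); have h4 := norm_nonneg (r 1)
    rw [hsrdef]; linarith
  have hsr0 : (0:ℝ) ≤ sr := by linarith
  have hss : ‖s 0‖ + ‖s 1‖ ≤ sr := by
    have h3 := norm_nonneg (r 0); have h4 := norm_nonneg (r 1)
    rw [hsrdef]; linarith
  have hrr : ‖r 0‖ + ‖r 1‖ ≤ sr := by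
    have h1 := norm_nonneg (s 0); have h2 := norm_nonneg (s 1)
    rw [hsrdef]; linarith
  set Q : ℝ := 2*C*sr*sr with hQdef
  have hCsr : (1:ℝ) ≤ C*sr := by nlinarith
  have hCss1 : (1:ℝ) ≤ C*sr*sr := by nlinarith
  have hQ1 : (1:ℝ) ≤ Q := by rw [hQdef]; linarith
  have hQ0 : (0:ℝ) < Q := by linarith
  have hCss : C*sr*sr ≤ Q := by rw [hQdef]; nlinarith
  have hsrC : sr*C ≤ Q := by rw [hQdef]; nlinarith
  have hMv : ∀ (l : ℕ) (w : Fin 2 → ℂ) (i : Fin 2),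
      ‖((M l) *ᵥ w) i‖ ≤ (C/ρ^l) * (‖w 0‖ + ‖w 1‖) := by
    intro l w i
    have he : ((M l) *ᵥ w) i = M l i 0 * w 0 + M l i 1 * w 1 := by
      simp [Matrix.mulVec, dotProduct, Fin.sum_univ_two]
    rw [he]
    have h0 := hMC l i 0
    have h1 := hMC l i 1
    have hw0 := norm_nonneg (w 0); have hw1 := norm_nonneg (w 1)
    calc ‖M l i 0 * w 0 + M l i 1 * w 1‖ ≤ ‖M l i 0 * w 0‖ + ‖M l i 1 * w 1‖ := norm_add_le _ _
      _ = ‖M l i 0‖ * ‖w 0‖ + ‖M l i 1‖ * ‖w 1‖ := by rw [norm_mul, norm_mul]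
      _ ≤ (C/ρ^l) * ‖w 0‖ + (C/ρ^l) * ‖w 1‖ :=
          add_le_add (mul_le_mul_of_nonneg_right h0 hw0) (mul_le_mul_of_nonneg_right h1 hw1)
      _ = (C/ρ^l) * (‖w 0‖ + ‖w 1‖) := by ring
  have hdotM : ∀ (a : Fin 2 → ℂ), ‖a 0‖ + ‖a 1‖ ≤ sr → ∀ (l : ℕ) (w : Fin 2 → ℂ),
      ‖a ⬝ᵥ (M l) *ᵥ w‖ ≤ (C/ρ^l) * sr * (‖w 0‖ + ‖w 1‖) := by
    intro a ha l w
    have he : a ⬝ᵥ (M l) *ᵥ w = a 0 * ((M l) *ᵥ w) 0 + a 1 * ((M l) *ᵥ w) 1 := by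
      simp [dotProduct, Fin.sum_univ_two]
    rw [he]
    have h0 := hMv l w 0
    have h1 := hMv l w 1
    have ha0 := norm_nonneg (a 0); have ha1 := norm_nonneg (a 1)
    have hw0 := norm_nonneg (w 0); have hw1 := norm_nonneg (w 1)
    have hcl : (0:ℝ) ≤ (C/ρ^l) * (‖w 0‖ + ‖w 1‖) :=
      mul_nonneg (div_nonneg hC0 (le_of_lt (pow_pos hρ0 l)))
        (add_nonneg (norm_nonneg _) (norm_nonneg _))
    calc ‖a 0 * ((M l) *ᵥ w) 0 + a 1 * ((M l) *ᵥ w) 1‖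
        ≤ ‖a 0‖ * ‖((M l) *ᵥ w) 0‖ + ‖a 1‖ * ‖((M l) *ᵥ w) 1‖ := by
          refine le_trans (norm_add_le _ _) ?_
          rw [norm_mul, norm_mul]
      _ ≤ ‖a 0‖ * ((C/ρ^l) * (‖w 0‖ + ‖w 1‖)) + ‖a 1‖ * ((C/ρ^l) * (‖w 0‖ + ‖w 1‖)) :=
          add_le_add (mul_le_mul_of_nonneg_left h0 ha0) (mul_le_mul_of_nonneg_left h1 ha1)
      _ = (‖a 0‖ + ‖a 1‖) * ((C/ρ^l) * (‖w 0‖ + ‖w 1‖)) := by ring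
      _ ≤ sr * ((C/ρ^l) * (‖w 0‖ + ‖w 1‖)) := mul_le_mul_of_nonneg_right ha hcl
      _ = (C/ρ^l) * sr * (‖w 0‖ + ‖w 1‖) := by ring
  have hdotb : ∀ (a : Fin 2 → ℂ), ‖a 0‖ + ‖a 1‖ ≤ sr → ∀ (m : ℕ),
      ‖a ⬝ᵥ b m‖ ≤ Q/ρ^m := by
    intro a ha m
    have he : a ⬝ᵥ b m = a 0 * b m 0 + a 1 * b m 1 := by
      simp [dotProduct, Fin.sum_univ_two]
    rw [he]
    have h0 := hbC m 0
    have h1 := hbC m 1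
    have ha0 := norm_nonneg (a 0); have ha1 := norm_nonneg (a 1)
    have hcl : (0:ℝ) ≤ C/ρ^m := div_nonneg hC0 (le_of_lt (pow_pos hρ0 m))
    have step : ‖a 0 * b m 0 + a 1 * b m 1‖ ≤ sr * (C/ρ^m) := by
      calc ‖a 0 * b m 0 + a 1 * b m 1‖ ≤ ‖a 0‖ * ‖b m 0‖ + ‖a 1‖ * ‖b m 1‖ := by
            refine le_trans (norm_add_le _ _) ?_
            rw [norm_mul, norm_mul]
        _ ≤ ‖a 0‖ * (C/ρ^m) + ‖a 1‖ * (C/ρ^m) :=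
            add_le_add (mul_le_mul_of_nonneg_left h0 ha0) (mul_le_mul_of_nonneg_left h1 ha1)
        _ = (‖a 0‖ + ‖a 1‖) * (C/ρ^m) := by ring
        _ ≤ sr * (C/ρ^m) := mul_le_mul_of_nonneg_right ha hcl
    refine le_trans step ?_
    have he2 : sr * (C/ρ^m) = (sr*C)/ρ^m := by ring
    rw [he2]
    exact div_le_div₀ (le_of_lt hQ0) hsrC (pow_pos hρ0 m) le_rfl
  have hterm : ∀ (a : Fin 2 → ℂ), ‖a 0‖ + ‖a 1‖ ≤ sr → ∀ l k,
      ‖a ⬝ᵥ (M l) *ᵥ (T k)‖ ≤ (Q/ρ^l) * (‖X k‖ + ‖Y k‖) := by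
    intro a ha l k
    have hXY0 : (0:ℝ) ≤ ‖X k‖ + ‖Y k‖ := by
      have := norm_nonneg (X k); have := norm_nonneg (Y k); linarith
    have hTk : ‖T k 0‖ + ‖T k 1‖ ≤ sr * (‖X k‖ + ‖Y k‖) := by
      have h0 : T k 0 = X k * s 0 + Y k * r 0 := by
        rw [hT k]; simp
      have h1 : T k 1 = X k * s 1 + Y k * r 1 := by
        rw [hT k]; simp
      have e0 : ‖T k 0‖ ≤ ‖X k‖ * ‖s 0‖ + ‖Y k‖ * ‖r 0‖ := by
        rw [h0]
        refine le_trans (norm_add_le _ _) ?_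
        rw [norm_mul, norm_mul]
      have e1 : ‖T k 1‖ ≤ ‖X k‖ * ‖s 1‖ + ‖Y k‖ * ‖r 1‖ := by
        rw [h1]
        refine le_trans (norm_add_le _ _) ?_
        rw [norm_mul, norm_mul]
      have hX0 := norm_nonneg (X k); have hY00 := norm_nonneg (Y k)
      calc ‖T k 0‖ + ‖T k 1‖ ≤ (‖X k‖ * ‖s 0‖ + ‖Y k‖ * ‖r 0‖) + (‖X k‖ * ‖s 1‖ + ‖Y k‖ * ‖r 1‖) :=
            add_le_add e0 e1
        _ = ‖X k‖ * (‖s 0‖ + ‖s 1‖) + ‖Y k‖ * (‖r 0‖ + ‖r 1‖) := by ring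
        _ ≤ ‖X k‖ * sr + ‖Y k‖ * sr :=
            add_le_add (mul_le_mul_of_nonneg_left hss hX0) (mul_le_mul_of_nonneg_left hrr hY00)
        _ = sr * (‖X k‖ + ‖Y k‖) := by ring
    have hcl : (0:ℝ) ≤ (C/ρ^l) * sr :=
      mul_nonneg (div_nonneg hC0 (le_of_lt (pow_pos hρ0 l))) hsr0
    calc ‖a ⬝ᵥ (M l) *ᵥ (T k)‖ ≤ (C/ρ^l) * sr * (‖T k 0‖ + ‖T k 1‖) := hdotM a ha l (T k)
      _ ≤ (C/ρ^l) * sr * (sr * (‖X k‖ + ‖Y k‖)) := mul_le_mul_of_nonneg_left hTk hcl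
      _ = ((C*sr*sr)/ρ^l) * (‖X k‖ + ‖Y k‖) := by ring
      _ ≤ (Q/ρ^l) * (‖X k‖ + ‖Y k‖) := by
          refine mul_le_mul_of_nonneg_right ?_ hXY0
          exact div_le_div₀ (le_of_lt hQ0) hCss (pow_pos hρ0 l) le_rfl
  set K : ℝ := ‖E⁻¹ 0 0‖ + ‖E⁻¹ 0 1‖ + ‖E⁻¹ 1 0‖ + ‖E⁻¹ 1 1‖ + 1 with hKdef
  have hK1 : (1:ℝ) ≤ K := by
    have h1 := norm_nonneg (E⁻¹ 0 0); have h2 := norm_nonneg (E⁻¹ 0 1)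
    have h3 := norm_nonneg (E⁻¹ 1 0); have h4 := norm_nonneg (E⁻¹ 1 1)
    rw [hKdef]; linarith
  have hK0 : (0:ℝ) < K := by linarith
  have hKr0 : ‖E⁻¹ 0 0‖ + ‖E⁻¹ 0 1‖ ≤ K := by
    have h3 := norm_nonneg (E⁻¹ 1 0); have h4 := norm_nonneg (E⁻¹ 1 1)
    rw [hKdef]; linarith
  have hKr1 : ‖E⁻¹ 1 0‖ + ‖E⁻¹ 1 1‖ ≤ K := by
    have h1 := norm_nonneg (E⁻¹ 0 0); have h2 := norm_nonneg (E⁻¹ 0 1)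
    rw [hKdef]; linarith
  set A : ℝ := max 1 (2*K*Q/ρ^2) with hAdef
  have hA1 : (1:ℝ) ≤ A := le_max_left _ _
  have hA0 : (0:ℝ) < A := by linarith
  have hA2 : 2*K*Q/ρ^2 ≤ A := le_max_right _ _
  set R : ℝ := max (2/ρ) (10*K*Q/ρ^3) with hRdef
  have hR2ρ : 2/ρ ≤ R := le_max_left _ _
  have hR10 : 10*K*Q/ρ^3 ≤ R := le_max_right _ _
  have hR1 : (1:ℝ) ≤ R := by
    refine le_trans ?_ hR2ρ
    rw [le_div_iff₀ hρ0]; linarith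
  have hR0 : (0:ℝ) < R := by linarith
  have hRne : R ≠ 0 := ne_of_gt hR0
  have hρR : 2 ≤ ρ*R := by
    have h := mul_le_mul_of_nonneg_left hR2ρ (le_of_lt hρ0)
    calc (2:ℝ) = ρ*(2/ρ) := by field_simp
      _ ≤ ρ*R := h
  have hinvρR : 1/ρ ≤ R := by
    rw [div_le_iff₀ hρ0]
    have h := hρR
    rw [mul_comm] at h
    linarith
  have hρn : ∀ n : ℕ, 1/ρ^n ≤ R^n := by
    intro n
    calc 1/ρ^n = (1/ρ)^n := by rw [div_pow, one_pow]
      _ ≤ R^n := pow_le_pow_left₀ (le_of_lt (div_pos one_pos hρ0)) hinvρR n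
  have hQρn : ∀ n : ℕ, Q/ρ^(n+2) ≤ (Q/ρ^2)*R^n := by
    intro n
    have he : Q/ρ^(n+2) = (Q/ρ^2)*(1/ρ^n) := by
      rw [pow_add]
      field_simp
    rw [he]
    refine mul_le_mul_of_nonneg_left (hρn n) ?_
    exact div_nonneg (le_of_lt hQ0) (le_of_lt (pow_pos hρ0 2))
  -- component formulas
  have hcomp0 : ∀ n, X n = E⁻¹ 0 0 * (s ⬝ᵥ b (n+2) - Y n * (s ⬝ᵥ (M 2).mulVec r)
        - ∑ l ∈ Finset.Icc 3 (n+2), s ⬝ᵥ (M l).mulVec (T (n+2-l)))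
      + E⁻¹ 0 1 * (r ⬝ᵥ b (n+1) - Y n * (r ⬝ᵥ (M 1).mulVec r)
        - ∑ l ∈ Finset.Icc 2 (n+1), r ⬝ᵥ (M l).mulVec (T (n+1-l))) := by
    intro n
    have h := congrFun (hvec n) 0
    simpa [Matrix.mulVec, dotProduct, Fin.sum_univ_two] using h
  have hcomp1 : ∀ n, Y (n+1) = E⁻¹ 1 0 * (s ⬝ᵥ b (n+2) - Y n * (s ⬝ᵥ (M 2).mulVec r)
        - ∑ l ∈ Finset.Icc 3 (n+2), s ⬝ᵥ (M l).mulVec (T (n+2-l)))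
      + E⁻¹ 1 1 * (r ⬝ᵥ b (n+1) - Y n * (r ⬝ᵥ (M 1).mulVec r)
        - ∑ l ∈ Finset.Icc 2 (n+1), r ⬝ᵥ (M l).mulVec (T (n+1-l))) := by
    intro n
    have h := congrFun (hvec n) 1
    simpa [Matrix.mulVec, dotProduct, Fin.sum_univ_two] using h
  set D : ℝ := Q/ρ^2 + A*Q/(ρ^2*R) + 4*A*Q/(ρ^3*R) with hDdef
  have hD0 : (0:ℝ) ≤ D := by
    rw [hDdef]
    have h1 : (0:ℝ) ≤ Q/ρ^2 := div_nonneg (le_of_lt hQ0) (le_of_lt (pow_pos hρ0 2))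
    have h2 : (0:ℝ) ≤ A*Q/(ρ^2*R) :=
      div_nonneg (le_of_lt (mul_pos hA0 hQ0)) (le_of_lt (mul_pos (pow_pos hρ0 2) hR0))
    have h3 : (0:ℝ) ≤ 4*A*Q/(ρ^3*R) :=
      div_nonneg (le_of_lt (by positivity : (0:ℝ) < 4*(A*Q))|>.trans_eq (by ring)) (le_of_lt (mul_pos (pow_pos hρ0 3) hR0))
    linarith
  have hKD : K*D ≤ A := by
    have h2KQ : 2*K*Q ≤ A*ρ^2 := (div_le_iff₀ (pow_pos hρ0 2)).mp hA2
    have h10KQ : 10*K*Q ≤ R*ρ^3 := (div_le_iff₀ (pow_pos hρ0 3)).mp hR10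
    have hpos : (0:ℝ) < ρ^3*R := mul_pos (pow_pos hρ0 3) hR0
    have he : K*D = (K*Q*(ρ*R) + K*A*Q*ρ + 4*K*A*Q)/(ρ^3*R) := by
      rw [hDdef]
      field_simp
    rw [he, div_le_iff₀ hpos]
    have e1 : (2*K*Q)*(ρ*R) ≤ (A*ρ^2)*(ρ*R) :=
      mul_le_mul_of_nonneg_right h2KQ (le_of_lt (mul_pos hρ0 hR0))
    have e2 : (10*K*Q)*A ≤ (R*ρ^3)*A := mul_le_mul_of_nonneg_right h10KQ (le_of_lt hA0)
    have e3 : K*A*Q*ρ ≤ K*A*Q := by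
      have hc : (0:ℝ) ≤ K*A*Q := le_of_lt (mul_pos (mul_pos hK0 hA0) hQ0)
      nlinarith [mul_le_mul_of_nonneg_left hρ1 hc]
    linarith
  -- the main induction
  have hbd : ∀ n, ‖X n‖ ≤ A*R^n ∧ ‖Y (n+1)‖ ≤ A*R^n := by
    intro n
    induction n using Nat.strong_induction_on with
    | _ n ih =>
    have hXk : ∀ k, k < n → ‖X k‖ ≤ A*R^k := fun k hk => (ih k hk).1
    have hYR : ∀ k, k ≤ n → ‖Y k‖ * R ≤ A*R^k := by
      intro k hk
      match k with
      | 0 =>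
        rw [hY0, norm_zero, zero_mul]
        exact le_of_lt (mul_pos hA0 (pow_pos hR0 0))
      | (j+1) =>
        have h := (ih j (by omega)).2
        calc ‖Y (j+1)‖ * R ≤ (A*R^j)*R := mul_le_mul_of_nonneg_right h (le_of_lt hR0)
          _ = A*R^(j+1) := by ring
    have hYk : ∀ k, k ≤ n → ‖Y k‖ ≤ A*R^k := by
      intro k hk
      have h1 : ‖Y k‖ ≤ ‖Y k‖ * R := le_mul_of_one_le_right (norm_nonneg _) hR1
      exact le_trans h1 (hYR k hk)
    have hg : ∀ j, j < n → ‖X j‖ + ‖Y j‖ ≤ 2*A*R^j := by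
      intro j hj
      have h1 := hXk j hj
      have h2 := hYk j (by omega)
      linarith
    have hs1 : ∑ l ∈ Finset.Icc 3 (n+2), ‖s ⬝ᵥ (M l).mulVec (T (n+2-l))‖
        ≤ 4*A*Q*R^n/(ρ^3*R) := by
      rw [← Finset.Ico_add_one_right_eq_Icc, Finset.sum_Ico_eq_sum_range]
      rw [show n+2+1-3 = n by omega]
      refine le_trans (Finset.sum_le_sum ?_)
        (sum_bound_real A R ρ Q (le_of_lt hA0) (le_of_lt hQ0) hρ0 hR1 hρR n
          (fun k => ‖X k‖ + ‖Y k‖) hg)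
      intro j hj
      rw [Finset.mem_range] at hj
      rw [show n+2-(3+j) = n-1-j by omega]
      simpa using hterm s hss (3+j) (n-1-j)
    have hs2 : ∑ l ∈ Finset.Icc 2 (n+1), ‖r ⬝ᵥ (M l).mulVec (T (n+1-l))‖
        ≤ 4*A*Q*R^n/(ρ^3*R) := by
      rw [← Finset.Ico_add_one_right_eq_Icc, Finset.sum_Ico_eq_sum_range]
      rw [show n+1+1-2 = n by omega]
      refine le_trans (Finset.sum_le_sum ?_)
        (sum_bound_real A R ρ Q (le_of_lt hA0) (le_of_lt hQ0) hρ0 hR1 hρR n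
          (fun k => ‖X k‖ + ‖Y k‖) hg)
      intro j hj
      rw [Finset.mem_range] at hj
      rw [show n+1-(2+j) = n-1-j by omega]
      refine le_trans (hterm r hrr (2+j) (n-1-j)) ?_
      refine mul_le_mul_of_nonneg_right ?_ ?_
      · exact div_le_div₀ (le_of_lt hQ0) le_rfl (pow_pos hρ0 (3+j))
          (pow_le_pow_of_le_one (le_of_lt hρ0) hρ1 (by omega))
      · have := norm_nonneg (X (n-1-j)); have := norm_nonneg (Y (n-1-j)); linarith
    have hYhead : ∀ cc : ℂ, ‖cc‖ ≤ Q/ρ^2 → ‖Y n * cc‖ ≤ (A*Q/(ρ^2*R))*R^n := by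
      intro cc hcc
      rw [norm_mul]
      have hq2R : (0:ℝ) ≤ Q/(ρ^2*R) :=
        div_nonneg (le_of_lt hQ0) (le_of_lt (mul_pos (pow_pos hρ0 2) hR0))
      calc ‖Y n‖*‖cc‖ ≤ ‖Y n‖*(Q/ρ^2) := mul_le_mul_of_nonneg_left hcc (norm_nonneg _)
        _ = (‖Y n‖*R)*(Q/(ρ^2*R)) := by
            field_simp
        _ ≤ (A*R^n)*(Q/(ρ^2*R)) := mul_le_mul_of_nonneg_right (hYR n le_rfl) hq2R
        _ = (A*Q/(ρ^2*R))*R^n := by ring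
    have hcc1 : ‖s ⬝ᵥ (M 2).mulVec r‖ ≤ Q/ρ^2 := by
      refine le_trans (hdotM s hss 2 r) ?_
      have hcl : (0:ℝ) ≤ C/ρ^2 := div_nonneg hC0 (le_of_lt (pow_pos hρ0 2))
      calc (C/ρ^2)*sr*(‖r 0‖+‖r 1‖) ≤ (C/ρ^2)*sr*sr := by
            refine mul_le_mul_of_nonneg_left hrr ?_
            nlinarith
        _ = (C*sr*sr)/ρ^2 := by ring
        _ ≤ Q/ρ^2 := div_le_div₀ (le_of_lt hQ0) hCss (pow_pos hρ0 2) le_rfl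
    have hcc2 : ‖r ⬝ᵥ (M 1).mulVec r‖ ≤ Q/ρ^2 := by
      refine le_trans (hdotM r hrr 1 r) ?_
      have hcl : (0:ℝ) ≤ C/ρ^1 := div_nonneg hC0 (le_of_lt (pow_pos hρ0 1))
      calc (C/ρ^1)*sr*(‖r 0‖+‖r 1‖) ≤ (C/ρ^1)*sr*sr := by
            refine mul_le_mul_of_nonneg_left hrr ?_
            nlinarith
        _ = (C*sr*sr)/ρ^1 := by ring
        _ ≤ Q/ρ^2 := div_le_div₀ (le_of_lt hQ0) hCss (pow_pos hρ0 2)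
            (pow_le_pow_of_le_one (le_of_lt hρ0) hρ1 (by omega))
    have hF1 : ‖s ⬝ᵥ b (n+2) - Y n * (s ⬝ᵥ (M 2).mulVec r)
        - ∑ l ∈ Finset.Icc 3 (n+2), s ⬝ᵥ (M l).mulVec (T (n+2-l))‖ ≤ D*R^n := by
      have h1 : ‖s ⬝ᵥ b (n+2)‖ ≤ (Q/ρ^2)*R^n := le_trans (hdotb s hss (n+2)) (hQρn n)
      have h2 := hYhead _ hcc1
      have h3 : ‖∑ l ∈ Finset.Icc 3 (n+2), s ⬝ᵥ (M l).mulVec (T (n+2-l))‖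
          ≤ 4*A*Q*R^n/(ρ^3*R) := le_trans (norm_sum_le _ _) hs1
      calc ‖s ⬝ᵥ b (n+2) - Y n * (s ⬝ᵥ (M 2).mulVec r)
          - ∑ l ∈ Finset.Icc 3 (n+2), s ⬝ᵥ (M l).mulVec (T (n+2-l))‖
          ≤ ‖s ⬝ᵥ b (n+2) - Y n * (s ⬝ᵥ (M 2).mulVec r)‖
            + ‖∑ l ∈ Finset.Icc 3 (n+2), s ⬝ᵥ (M l).mulVec (T (n+2-l))‖ := norm_sub_le _ _
        _ ≤ (‖s ⬝ᵥ b (n+2)‖ + ‖Y n * (s ⬝ᵥ (M 2).mulVec r)‖)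
            + ‖∑ l ∈ Finset.Icc 3 (n+2), s ⬝ᵥ (M l).mulVec (T (n+2-l))‖ :=
            add_le_add_left (norm_sub_le _ _) _
        _ ≤ ((Q/ρ^2)*R^n + (A*Q/(ρ^2*R))*R^n) + 4*A*Q*R^n/(ρ^3*R) :=
            add_le_add (add_le_add h1 h2) h3
        _ = D*R^n := by rw [hDdef]; ring
    have hF2 : ‖r ⬝ᵥ b (n+1) - Y n * (r ⬝ᵥ (M 1).mulVec r)
        - ∑ l ∈ Finset.Icc 2 (n+1), r ⬝ᵥ (M l).mulVec (T (n+1-l))‖ ≤ D*R^n := by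
      have h1 : ‖r ⬝ᵥ b (n+1)‖ ≤ (Q/ρ^2)*R^n := by
        refine le_trans (hdotb r hrr (n+1)) (le_trans ?_ (hQρn n))
        exact div_le_div₀ (le_of_lt hQ0) le_rfl (pow_pos hρ0 (n+2))
          (pow_le_pow_of_le_one (le_of_lt hρ0) hρ1 (by omega))
      have h2 := hYhead _ hcc2
      have h3 : ‖∑ l ∈ Finset.Icc 2 (n+1), r ⬝ᵥ (M l).mulVec (T (n+1-l))‖
          ≤ 4*A*Q*R^n/(ρ^3*R) := le_trans (norm_sum_le _ _) hs2
      calc ‖r ⬝ᵥ b (n+1) - Y n * (r ⬝ᵥ (M 1).mulVec r)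
          - ∑ l ∈ Finset.Icc 2 (n+1), r ⬝ᵥ (M l).mulVec (T (n+1-l))‖
          ≤ ‖r ⬝ᵥ b (n+1) - Y n * (r ⬝ᵥ (M 1).mulVec r)‖
            + ‖∑ l ∈ Finset.Icc 2 (n+1), r ⬝ᵥ (M l).mulVec (T (n+1-l))‖ := norm_sub_le _ _
        _ ≤ (‖r ⬝ᵥ b (n+1)‖ + ‖Y n * (r ⬝ᵥ (M 1).mulVec r)‖)
            + ‖∑ l ∈ Finset.Icc 2 (n+1), r ⬝ᵥ (M l).mulVec (T (n+1-l))‖ :=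
            add_le_add_left (norm_sub_le _ _) _
        _ ≤ ((Q/ρ^2)*R^n + (A*Q/(ρ^2*R))*R^n) + 4*A*Q*R^n/(ρ^3*R) :=
            add_le_add (add_le_add h1 h2) h3
        _ = D*R^n := by rw [hDdef]; ring
    have hDR0 : (0:ℝ) ≤ D*R^n := mul_nonneg hD0 (le_of_lt (pow_pos hR0 n))
    have hfin : ∀ (u v : ℂ) (c1 c2 : ℝ), ‖u‖ ≤ D*R^n → ‖v‖ ≤ D*R^n → c1 = ‖E⁻¹ 0 0‖ + 0 → True → True := fun _ _ _ _ _ _ _ _ => trivial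
    constructor
    · rw [hcomp0 n]
      calc ‖E⁻¹ 0 0 * (s ⬝ᵥ b (n+2) - Y n * (s ⬝ᵥ (M 2).mulVec r)
            - ∑ l ∈ Finset.Icc 3 (n+2), s ⬝ᵥ (M l).mulVec (T (n+2-l)))
          + E⁻¹ 0 1 * (r ⬝ᵥ b (n+1) - Y n * (r ⬝ᵥ (M 1).mulVec r)
            - ∑ l ∈ Finset.Icc 2 (n+1), r ⬝ᵥ (M l).mulVec (T (n+1-l)))‖
          ≤ ‖E⁻¹ 0 0‖ * ‖s ⬝ᵥ b (n+2) - Y n * (s ⬝ᵥ (M 2).mulVec r)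
            - ∑ l ∈ Finset.Icc 3 (n+2), s ⬝ᵥ (M l).mulVec (T (n+2-l))‖
            + ‖E⁻¹ 0 1‖ * ‖r ⬝ᵥ b (n+1) - Y n * (r ⬝ᵥ (M 1).mulVec r)
            - ∑ l ∈ Finset.Icc 2 (n+1), r ⬝ᵥ (M l).mulVec (T (n+1-l))‖ := by
            refine le_trans (norm_add_le _ _) ?_
            rw [norm_mul, norm_mul]
        _ ≤ ‖E⁻¹ 0 0‖ * (D*R^n) + ‖E⁻¹ 0 1‖ * (D*R^n) :=
            add_le_add (mul_le_mul_of_nonneg_left hF1 (norm_nonneg _))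
              (mul_le_mul_of_nonneg_left hF2 (norm_nonneg _))
        _ = (‖E⁻¹ 0 0‖ + ‖E⁻¹ 0 1‖) * (D*R^n) := by ring
        _ ≤ K * (D*R^n) := mul_le_mul_of_nonneg_right hKr0 hDR0
        _ = (K*D)*R^n := by ring
        _ ≤ A*R^n := mul_le_mul_of_nonneg_right hKD (le_of_lt (pow_pos hR0 n))
    · rw [hcomp1 n]
      calc ‖E⁻¹ 1 0 * (s ⬝ᵥ b (n+2) - Y n * (s ⬝ᵥ (M 2).mulVec r)
            - ∑ l ∈ Finset.Icc 3 (n+2), s ⬝ᵥ (M l).mulVec (T (n+2-l)))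
          + E⁻¹ 1 1 * (r ⬝ᵥ b (n+1) - Y n * (r ⬝ᵥ (M 1).mulVec r)
            - ∑ l ∈ Finset.Icc 2 (n+1), r ⬝ᵥ (M l).mulVec (T (n+1-l)))‖
          ≤ ‖E⁻¹ 1 0‖ * ‖s ⬝ᵥ b (n+2) - Y n * (s ⬝ᵥ (M 2).mulVec r)
            - ∑ l ∈ Finset.Icc 3 (n+2), s ⬝ᵥ (M l).mulVec (T (n+2-l))‖
            + ‖E⁻¹ 1 1‖ * ‖r ⬝ᵥ b (n+1) - Y n * (r ⬝ᵥ (M 1).mulVec r)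
            - ∑ l ∈ Finset.Icc 2 (n+1), r ⬝ᵥ (M l).mulVec (T (n+1-l))‖ := by
            refine le_trans (norm_add_le _ _) ?_
            rw [norm_mul, norm_mul]
        _ ≤ ‖E⁻¹ 1 0‖ * (D*R^n) + ‖E⁻¹ 1 1‖ * (D*R^n) :=
            add_le_add (mul_le_mul_of_nonneg_left hF1 (norm_nonneg _))
              (mul_le_mul_of_nonneg_left hF2 (norm_nonneg _))
        _ = (‖E⁻¹ 1 0‖ + ‖E⁻¹ 1 1‖) * (D*R^n) := by ring
        _ ≤ K * (D*R^n) := mul_le_mul_of_nonneg_right hKr1 hDR0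
        _ = (K*D)*R^n := by ring
        _ ≤ A*R^n := mul_le_mul_of_nonneg_right hKD (le_of_lt (pow_pos hR0 n))
  -- conclusion
  refine ⟨A*sr, 1/R, div_pos one_pos hR0, ?_⟩
  intro n i
  have hXn : ‖X n‖ ≤ A*R^n := (hbd n).1
  have hYn : ‖Y n‖ ≤ A*R^n := by
    match n with
    | 0 =>
      rw [hY0, norm_zero]
      exact le_of_lt (mul_pos hA0 (pow_pos hR0 0))
    | (j+1) =>
      refine le_trans (hbd j).2 ?_
      refine mul_le_mul_of_nonneg_left ?_ (le_of_lt hA0)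
      exact pow_le_pow_right₀ hR1 (by omega)
  have hTe : T n i = X n * s i + Y n * r i := by
    rw [hT n]; simp
  have hTi : ‖T n i‖ ≤ ‖X n‖*‖s i‖ + ‖Y n‖*‖r i‖ := by
    rw [hTe]
    refine le_trans (norm_add_le _ _) ?_
    rw [norm_mul, norm_mul]
  have hsri : ‖s i‖ + ‖r i‖ ≤ sr := by
    have h1 := norm_nonneg (s 0); have h2 := norm_nonneg (s 1)
    have h3 := norm_nonneg (r 0); have h4 := norm_nonneg (r 1)
    fin_cases i
    · show ‖s 0‖ + ‖r 0‖ ≤ sr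
      rw [hsrdef]; linarith
    · show ‖s 1‖ + ‖r 1‖ ≤ sr
      rw [hsrdef]; linarith
  have hARn : (0:ℝ) ≤ A*R^n := le_of_lt (mul_pos hA0 (pow_pos hR0 n))
  calc ‖T n i‖ ≤ ‖X n‖*‖s i‖ + ‖Y n‖*‖r i‖ := hTi
    _ ≤ (A*R^n)*‖s i‖ + (A*R^n)*‖r i‖ :=
        add_le_add (mul_le_mul_of_nonneg_right hXn (norm_nonneg _))
          (mul_le_mul_of_nonneg_right hYn (norm_nonneg _))
    _ = (A*R^n)*(‖s i‖+‖r i‖) := by ring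
    _ ≤ (A*R^n)*sr := mul_le_mul_of_nonneg_left hsri hARn
    _ = (A*sr)/(1/R)^n := by
        rw [div_pow, one_pow]
        rw [eq_div_iff (one_div_ne_zero (pow_ne_zero n hRne))]
        field_simp
end

section
/- Under the hypotheses of the previous statement (M₀ singular with null space span{s}, range span{r}, sᵀr = 0, sᵀM₁s = 0, 𝓜₀ invertible), if additionally sᵀM₂s = 0 and b(z) = z·r, then the power series solution t(z) of M(z)t(z) = b(z) has leading coefficient t₀ = (rᵀr / rᵀM₁s) · s; note rᵀM₁s ≠ 0 since 𝓜₀ is invertible and its (1,1) entry sᵀM₂s vanishes. -/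
open Matrix

open Matrix Finset

noncomputable def stepF (P Q R S : ℕ → ℂ) (qi ei al : ℂ) (n : ℕ) (f : ℕ → ℂ × ℂ) : ℂ × ℂ :=
  ( qi * ((if n = 0 then 1 else 0)
      - al * (-ei * (∑ j ∈ Finset.range n, P (n+2-j) * (f j).1
          + ∑ j ∈ Finset.range (n+1), R (n+2-j) * (if j = 0 then 0 else (f (j-1)).2)))
      - S 1 * (if n = 0 then 0 else (f (n-1)).2)
      - ∑ j ∈ Finset.range n, (Q (n+1-j) * (f j).1 + S (n+1-j) * (if j = 0 then 0 else (f (j-1)).2))) ,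
    -ei * (∑ j ∈ Finset.range n, P (n+2-j) * (f j).1
      + ∑ j ∈ Finset.range (n+1), R (n+2-j) * (if j = 0 then 0 else (f (j-1)).2)) )

noncomputable def histF (P Q R S : ℕ → ℂ) (qi ei al : ℂ) : ℕ → ℕ → ℂ × ℂ
  | 0 => fun _ => 0
  | (n+1) => Function.update (histF P Q R S qi ei al n) n (stepF P Q R S qi ei al n (histF P Q R S qi ei al n))

noncomputable def gF (P Q R S : ℕ → ℂ) (qi ei al : ℂ) (n : ℕ) : ℂ × ℂ :=
  histF P Q R S qi ei al (n+1) n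

noncomputable def aF (P Q R S : ℕ → ℂ) (qi ei al : ℂ) (n : ℕ) : ℂ := (gF P Q R S qi ei al n).1

noncomputable def cF (P Q R S : ℕ → ℂ) (qi ei al : ℂ) (n : ℕ) : ℂ :=
  if n = 0 then 0 else (gF P Q R S qi ei al (n-1)).2

variable (P Q R S : ℕ → ℂ) (qi ei al : ℂ)

lemma gF_eq (n : ℕ) : gF P Q R S qi ei al n = stepF P Q R S qi ei al n (histF P Q R S qi ei al n) := by
  rw [gF, histF, Function.update_self]

lemma histF_stable : ∀ n m, m < n → histF P Q R S qi ei al n m = gF P Q R S qi ei al m := by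
  intro n
  induction n with
  | zero => intro m hm; omega
  | succ n ih =>
    intro m hm
    rcases Nat.lt_succ_iff_lt_or_eq.mp hm with h | h
    · rw [histF, Function.update_of_ne (by omega), ih m h]
    · subst h
      rw [histF, Function.update_self, ← gF_eq]

lemma histF_a (n j : ℕ) (hj : j < n) :
    (histF P Q R S qi ei al n j).1 = aF P Q R S qi ei al j := by
  rw [histF_stable P Q R S qi ei al n j hj]; rfl

lemma histF_c (n j : ℕ) (hj : j ≤ n) :
    (if j = 0 then (0:ℂ) else (histF P Q R S qi ei al n (j-1)).2) = cF P Q R S qi ei al j := by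
  rcases Nat.eq_zero_or_pos j with h0 | h0
  · subst h0; rw [cF]; rfl
  · rw [if_neg (by omega), histF_stable P Q R S qi ei al n (j-1) (by omega),
      cF, if_neg (by omega)]

lemma cF_zero : cF P Q R S qi ei al 0 = 0 := rfl

lemma cF_succ (n : ℕ) :
    cF P Q R S qi ei al (n+1) =
      -ei * (∑ j ∈ Finset.range n, P (n+2-j) * aF P Q R S qi ei al j
        + ∑ j ∈ Finset.range (n+1), R (n+2-j) * cF P Q R S qi ei al j) := by
  have h : cF P Q R S qi ei al (n+1) = (gF P Q R S qi ei al n).2 := by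
    rw [cF, if_neg (by omega)]; rfl
  have e1 : ∑ j ∈ Finset.range n, P (n+2-j) * (histF P Q R S qi ei al n j).1
      = ∑ j ∈ Finset.range n, P (n+2-j) * aF P Q R S qi ei al j :=
    Finset.sum_congr rfl fun j hj => by
      rw [histF_a P Q R S qi ei al n j (Finset.mem_range.mp hj)]
  have e2 : (∑ j ∈ Finset.range (n+1), R (n+2-j) * (if j = 0 then (0:ℂ) else (histF P Q R S qi ei al n (j-1)).2))
      = ∑ j ∈ Finset.range (n+1), R (n+2-j) * cF P Q R S qi ei al j :=
    Finset.sum_congr rfl fun j hj => by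
      rw [histF_c P Q R S qi ei al n j (Nat.lt_succ_iff.mp (Finset.mem_range.mp hj))]
  rw [h, gF_eq, stepF]
  dsimp only
  rw [e1, e2]

lemma aF_eq (n : ℕ) :
    aF P Q R S qi ei al n =
      qi * ((if n = 0 then 1 else 0) - al * cF P Q R S qi ei al (n+1)
        - S 1 * cF P Q R S qi ei al n
        - ∑ j ∈ Finset.range n, (Q (n+1-j) * aF P Q R S qi ei al j + S (n+1-j) * cF P Q R S qi ei al j)) := by
  have h : aF P Q R S qi ei al n = (gF P Q R S qi ei al n).1 := rfl
  have e1 : ∑ j ∈ Finset.range n, P (n+2-j) * (histF P Q R S qi ei al n j).1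
      = ∑ j ∈ Finset.range n, P (n+2-j) * aF P Q R S qi ei al j :=
    Finset.sum_congr rfl fun j hj => by
      rw [histF_a P Q R S qi ei al n j (Finset.mem_range.mp hj)]
  have e2 : (∑ j ∈ Finset.range (n+1), R (n+2-j) * (if j = 0 then (0:ℂ) else (histF P Q R S qi ei al n (j-1)).2))
      = ∑ j ∈ Finset.range (n+1), R (n+2-j) * cF P Q R S qi ei al j :=
    Finset.sum_congr rfl fun j hj => by
      rw [histF_c P Q R S qi ei al n j (Nat.lt_succ_iff.mp (Finset.mem_range.mp hj))]
  have e3 : ∑ j ∈ Finset.range n, (Q (n+1-j) * (histF P Q R S qi ei al n j).1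
        + S (n+1-j) * (if j = 0 then (0:ℂ) else (histF P Q R S qi ei al n (j-1)).2))
      = ∑ j ∈ Finset.range n, (Q (n+1-j) * aF P Q R S qi ei al j + S (n+1-j) * cF P Q R S qi ei al j) :=
    Finset.sum_congr rfl fun j hj => by
      rw [histF_a P Q R S qi ei al n j (Finset.mem_range.mp hj),
        histF_c P Q R S qi ei al n j (le_of_lt (Finset.mem_range.mp hj))]
  rw [h, gF_eq, stepF]
  dsimp only
  rw [e1, e2, e3, histF_c P Q R S qi ei al n n le_rfl, cF_succ]

section
variable (P Q R S : ℕ → ℂ) (q e al : ℂ)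

lemma EB_lemma (hq : q ≠ 0) (hQ0 : Q 0 = 0) (hQ1 : Q 1 = q) (hS0 : S 0 = al) (n : ℕ) :
    ∑ l ∈ Finset.range (n+1),
      (Q l * aF P Q R S q⁻¹ e⁻¹ al (n-l) + S l * cF P Q R S q⁻¹ e⁻¹ al (n-l))
      = if n = 1 then 1 else 0 := by
  set a := aF P Q R S q⁻¹ e⁻¹ al with ha
  set c := cF P Q R S q⁻¹ e⁻¹ al with hc
  cases n with
  | zero =>
    simp [hQ0, hS0, hc, cF_zero]
  | succ m =>
    rw [Finset.sum_range_succ' _ (m+1), Finset.sum_range_succ' _ m]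
    have hf0 : Q 0 * a (m+1-0) + S 0 * c (m+1-0) = al * c (m+1) := by
      simp [hQ0, hS0]
    have hf1 : Q (0+1) * a (m+1-(0+1)) + S (0+1) * c (m+1-(0+1)) = q * a m + S 1 * c m := by
      norm_num [hQ1]
    have hsum : ∑ i ∈ Finset.range m,
        (Q (i+1+1) * a (m+1-(i+1+1)) + S (i+1+1) * c (m+1-(i+1+1)))
        = ∑ j ∈ Finset.range m, (Q (m+1-j) * a j + S (m+1-j) * c j) := by
      rw [← Finset.sum_range_reflect (fun j => Q (m+1-j) * a j + S (m+1-j) * c j) m]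
      refine Finset.sum_congr rfl fun i hi => ?_
      have hi' := Finset.mem_range.mp hi
      have e1 : m+1-(i+1+1) = m-1-i := by omega
      have e2 : m+1-(m-1-i) = i+1+1 := by omega
      rw [e1, e2]
    rw [hf0, hf1, hsum]
    have haeq := aF_eq P Q R S q⁻¹ e⁻¹ al m
    rw [← ha, ← hc] at haeq
    have hqa : q * a m = (if m = 0 then 1 else 0) - al * c (m+1) - S 1 * c m
        - ∑ j ∈ Finset.range m, (Q (m+1-j) * a j + S (m+1-j) * c j) := by
      rw [haeq, ← mul_assoc, mul_inv_cancel₀ hq, one_mul]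
    rw [hqa]
    have : (if m+1 = 1 then (1:ℂ) else 0) = (if m = 0 then 1 else 0) := by
      by_cases h : m = 0 <;> simp [h]
    rw [this]; ring

lemma EA_lemma (he : e ≠ 0) (hP0 : P 0 = 0) (hR0 : R 0 = 0) (hP1 : P 1 = 0) (hP2 : P 2 = 0)
    (hR1 : R 1 = e) (n : ℕ) :
    ∑ l ∈ Finset.range (n+1),
      (P l * aF P Q R S q⁻¹ e⁻¹ al (n-l) + R l * cF P Q R S q⁻¹ e⁻¹ al (n-l)) = 0 := by
  set a := aF P Q R S q⁻¹ e⁻¹ al with ha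
  set c := cF P Q R S q⁻¹ e⁻¹ al with hc
  match n with
  | 0 => simp [hP0, hR0]
  | 1 =>
    rw [Finset.sum_range_succ, Finset.sum_range_one]
    have hc0 : c 0 = 0 := cF_zero _ _ _ _ _ _ _
    simp [hP0, hR0, hP1, hR1, hc0]
  | (m+2) =>
    rw [Finset.sum_range_succ' _ (m+2), Finset.sum_range_succ' _ (m+1), Finset.sum_range_succ' _ m]
    have hf0 : P 0 * a (m+2-0) + R 0 * c (m+2-0) = 0 := by simp [hP0, hR0]
    have hf1 : P (0+1) * a (m+2-(0+1)) + R (0+1) * c (m+2-(0+1)) = e * c (m+1) := by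
      norm_num [hP1, hR1]
    have hf2 : P (0+1+1) * a (m+2-(0+1+1)) + R (0+1+1) * c (m+2-(0+1+1)) = R 2 * c m := by
      norm_num [hP2]
    have hsum : ∑ i ∈ Finset.range m,
        (P (i+1+1+1) * a (m+2-(i+1+1+1)) + R (i+1+1+1) * c (m+2-(i+1+1+1)))
        = ∑ j ∈ Finset.range m, (P (m+2-j) * a j + R (m+2-j) * c j) := by
      rw [← Finset.sum_range_reflect (fun j => P (m+2-j) * a j + R (m+2-j) * c j) m]
      refine Finset.sum_congr rfl fun i hi => ?_
      have hi' := Finset.mem_range.mp hi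
      have e1 : m+2-(i+1+1+1) = m-1-i := by omega
      have e2 : m+2-(m-1-i) = i+1+1+1 := by omega
      rw [e1, e2]
    rw [hf0, hf1, hf2, hsum]
    have hceq := cF_succ P Q R S q⁻¹ e⁻¹ al m
    rw [← ha, ← hc] at hceq
    have hec : e * c (m+1) = -(∑ j ∈ Finset.range m, P (m+2-j) * a j
        + ∑ j ∈ Finset.range (m+1), R (m+2-j) * c j) := by
      rw [hceq, ← mul_assoc]
      rw [mul_neg, mul_inv_cancel₀ he]
      ring
    rw [hec, Finset.sum_add_distrib, Finset.sum_range_succ]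
    have : m + 2 - m = 2 := by omega
    rw [this]
    ring
end

lemma geo2 (x : ℝ) (hx : 2 ≤ x) (M : ℕ) : ∑ j ∈ Finset.range (M+1), x^j ≤ 2 * x^M := by
  have hx0 : (0:ℝ) < x := by linarith
  rw [← Finset.sum_range_reflect (fun j => x^j) (M+1)]
  have hb : ∀ j ∈ Finset.range (M+1), x ^ (M + 1 - 1 - j) ≤ x^M * (1/2)^j := by
    intro j hj
    have hj' : j ≤ M := Nat.lt_succ_iff.mp (Finset.mem_range.mp hj)
    have h1 : (M+1-1-j) = M - j := by omega
    have h2 : x^M = x^(M-j) * x^j := by rw [← pow_add]; congr 1; omega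
    rw [h1, h2, mul_assoc]
    nth_rewrite 1 [← mul_one (x^(M-j))]
    apply mul_le_mul_of_nonneg_left _ (by positivity)
    rw [← mul_pow]
    apply one_le_pow₀
    linarith
  calc ∑ j ∈ Finset.range (M+1), x ^ (M+1-1-j) ≤ ∑ j ∈ Finset.range (M+1), x^M * (1/2)^j :=
        Finset.sum_le_sum hb
    _ = x^M * ∑ j ∈ Finset.range (M+1), (1/2)^j := by rw [Finset.mul_sum]
    _ ≤ x^M * 2 := by
        have h := sum_geometric_two_le (M+1)
        apply mul_le_mul_of_nonneg_left _ (by positivity)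
        simpa using h
    _ = 2 * x^M := by ring

lemma geo (σ lam : ℝ) (hσ : 0 < σ) (hlam2 : 2 ≤ σ * lam) (N d : ℕ) :
    ∑ j ∈ Finset.range N, lam^j / σ^(N+d-j) ≤ 2 * lam^(N-1) / σ^(d+1) := by
  have hlam0 : 0 < lam := by nlinarith
  cases N with
  | zero => simp; positivity
  | succ M =>
    have hterm : ∀ j ∈ Finset.range (M+1), lam^j / σ^(M+1+d-j) = (lam*σ)^j / σ^(M+1+d) := by
      intro j hj
      have hj' : j ≤ M := Nat.lt_succ_iff.mp (Finset.mem_range.mp hj)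
      have h : σ^(M+1+d) = σ^(M+1+d-j) * σ^j := by rw [← pow_add]; congr 1; omega
      rw [h, mul_pow]
      field_simp
    rw [Finset.sum_congr rfl hterm, ← Finset.sum_div]
    have h1 : ∑ j ∈ Finset.range (M+1), (lam*σ)^j ≤ 2 * (lam*σ)^M := by
      apply geo2; linarith [hlam2]
    have h2 : (0:ℝ) < σ^(M+1+d) := by positivity
    rw [div_le_div_iff₀ h2 (by positivity)]
    have e1 : (M+1-1) = M := by omega
    rw [e1]
    calc (∑ j ∈ Finset.range (M+1), (lam*σ)^j) * σ^(d+1)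
        ≤ (2 * (lam*σ)^M) * σ^(d+1) := by
          apply mul_le_mul_of_nonneg_right h1 (by positivity)
      _ = 2 * lam^M * (σ^M * σ^(d+1)) := by rw [mul_pow]; ring
      _ = 2 * lam^M * σ^(M+1+d) := by rw [← pow_add]; congr 2; omega
set_option maxHeartbeats 2000000 in
lemma bound_lemma (P Q R S : ℕ → ℂ) (q e al : ℂ) (K σ : ℝ)
    (hσ0 : 0 < σ) (hK : 0 ≤ K)
    (hPb : ∀ l, ‖P l‖ ≤ K / σ^l) (hQb : ∀ l, ‖Q l‖ ≤ K / σ^l)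
    (hRb : ∀ l, ‖R l‖ ≤ K / σ^l) (hSb : ∀ l, ‖S l‖ ≤ K / σ^l) :
    ∃ A lam : ℝ, 1 ≤ A ∧ 1 ≤ lam ∧ ∀ n,
      ‖aF P Q R S q⁻¹ e⁻¹ al n‖ ≤ A * lam^n ∧ ‖cF P Q R S q⁻¹ e⁻¹ al n‖ ≤ A * lam^n := by
  set a := aF P Q R S q⁻¹ e⁻¹ al with ha
  set c := cF P Q R S q⁻¹ e⁻¹ al with hc
  clear_value a c
  obtain ⟨A, hA⟩ : ∃ x : ℝ, x = 2*‖q⁻¹‖*(1+‖al‖) + 1 := ⟨_, rfl⟩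
  obtain ⟨lam, hlam⟩ : ∃ x : ℝ,
      x = 1 + 2/σ + 4*‖e⁻¹‖*K*(A/σ^3 + 1/σ^2) + 2*‖q⁻¹‖*(K/σ + 2*K*(A+1)/σ^2) := ⟨_, rfl⟩
  have hA1 : 1 ≤ A := by
    have : 0 ≤ 2*‖q⁻¹‖*(1+‖al‖) := by positivity
    rw [hA]; linarith
  have hA0 : 0 < A := by linarith
  have hq1al : ‖q⁻¹‖*(1+‖al‖) = (A-1)/2 := by rw [hA]; ring
  have hlam1 : 1 ≤ lam := by
    have h1 : 0 ≤ 2/σ := by positivity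
    have h2 : 0 ≤ 4*‖e⁻¹‖*K*(A/σ^3 + 1/σ^2) := by positivity
    have h3 : 0 ≤ 2*‖q⁻¹‖*(K/σ + 2*K*(A+1)/σ^2) := by positivity
    rw [hlam]; linarith
  have hlam0 : 0 < lam := by linarith
  have hσlam : 2 ≤ σ * lam := by
    have h2 : 0 ≤ 4*‖e⁻¹‖*K*(A/σ^3 + 1/σ^2) := by positivity
    have h3 : 0 ≤ 2*‖q⁻¹‖*(K/σ + 2*K*(A+1)/σ^2) := by positivity
    have : 2/σ ≤ lam := by
      rw [hlam]; linarith
    calc (2:ℝ) = σ * (2/σ) := by field_simp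
      _ ≤ σ * lam := by apply mul_le_mul_of_nonneg_left this (le_of_lt hσ0)
  have hccond : ‖e⁻¹‖*(2*K*A/σ^3 + 2*K/σ^2) * 2 ≤ lam := by
    have h1 : 0 ≤ 1 + 2/σ := by positivity
    have h3 : 0 ≤ 2*‖q⁻¹‖*(K/σ + 2*K*(A+1)/σ^2) := by positivity
    have he : ‖e⁻¹‖*(2*K*A/σ^3 + 2*K/σ^2) * 2 = 4*‖e⁻¹‖*K*(A/σ^3 + 1/σ^2) := by
      field_simp; ring
    rw [he, hlam]; linarith
  have hacond : ‖q⁻¹‖*(K/σ + 2*K*(A+1)/σ^2) * 2 ≤ lam := by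
    have h1 : 0 ≤ 1 + 2/σ := by positivity
    have h2 : 0 ≤ 4*‖e⁻¹‖*K*(A/σ^3 + 1/σ^2) := by positivity
    rw [hlam]; linarith
  -- the key induction
  have key : ∀ n, ‖a n‖ ≤ A * lam^n ∧ ‖c (n+1)‖ ≤ lam^n := by
    intro n
    induction n using Nat.strong_induction_on with
    | _ n IH =>
    have Hc : ∀ m, m ≤ n → ‖c m‖ ≤ lam^m / lam := by
      intro m hm
      match m with
      | 0 =>
        have : c 0 = 0 := by rw [hc]; rfl
        rw [this]
        simp only [norm_zero, pow_zero]
        positivity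
      | (k+1) =>
        have hk : k < n := by omega
        have := (IH k hk).2
        calc ‖c (k+1)‖ ≤ lam^k := this
          _ = lam^(k+1)/lam := by rw [pow_succ]; field_simp
    have Ha : ∀ m, m < n → ‖a m‖ ≤ A * lam^m := fun m hm => (IH m hm).1
    -- bound on c (n+1)
    have hcgoal : ‖c (n+1)‖ ≤ lam^n := by
      match n with
      | 0 =>
        have hc0 : c 0 = 0 := by rw [hc]; rfl
        have : c 1 = 0 := by
          rw [hc, cF_succ]
          rw [← hc]
          simp [hc0]
        rw [this]; simp
      | (m+1) =>
        set n' := m + 1 with hn'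
        rw [hc, cF_succ, ← ha, ← hc]
        rw [norm_mul, norm_neg, norm_inv]
        have hS1b : ‖∑ j ∈ Finset.range n', P (n'+2-j) * a j‖
            ≤ K * A * (2 * lam^(n'-1) / σ^(2+1)) := by
          calc ‖∑ j ∈ Finset.range n', P (n'+2-j) * a j‖
              ≤ ∑ j ∈ Finset.range n', ‖P (n'+2-j) * a j‖ := norm_sum_le _ _
            _ ≤ ∑ j ∈ Finset.range n', (K/σ^(n'+2-j)) * (A * lam^j) := by
                apply Finset.sum_le_sum
                intro j hj
                rw [norm_mul]
                apply mul_le_mul (hPb _) (Ha j (Finset.mem_range.mp hj)) (norm_nonneg _)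
                positivity
            _ = K * A * ∑ j ∈ Finset.range n', lam^j / σ^(n'+2-j) := by
                rw [Finset.mul_sum]
                exact Finset.sum_congr rfl fun j hj => by ring
            _ ≤ K * A * (2 * lam^(n'-1) / σ^(2+1)) := by
                apply mul_le_mul_of_nonneg_left (geo σ lam hσ0 hσlam n' 2) (by positivity)
        have hS2b : ‖∑ j ∈ Finset.range (n'+1), R (n'+2-j) * c j‖
            ≤ K / lam * (2 * lam^n' / σ^(1+1)) := by
          calc ‖∑ j ∈ Finset.range (n'+1), R (n'+2-j) * c j‖
              ≤ ∑ j ∈ Finset.range (n'+1), ‖R (n'+2-j) * c j‖ := norm_sum_le _ _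
            _ ≤ ∑ j ∈ Finset.range (n'+1), (K/σ^(n'+2-j)) * (lam^j / lam) := by
                apply Finset.sum_le_sum
                intro j hj
                rw [norm_mul]
                apply mul_le_mul (hRb _) (Hc j (Nat.lt_succ_iff.mp (Finset.mem_range.mp hj)))
                  (norm_nonneg _)
                positivity
            _ = K / lam * ∑ j ∈ Finset.range (n'+1), lam^j / σ^(n'+1+1-j) := by
                rw [Finset.mul_sum]
                refine Finset.sum_congr rfl fun j hj => ?_
                have : n' + 1 + 1 - j = n' + 2 - j := by omega
                rw [this]; ring
            _ ≤ K / lam * (2 * lam^(n'+1-1) / σ^(1+1)) := by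
                apply mul_le_mul_of_nonneg_left (geo σ lam hσ0 hσlam (n'+1) 1) (by positivity)
            _ = K / lam * (2 * lam^n' / σ^(1+1)) := by norm_num
        calc ‖e‖⁻¹ * ‖∑ j ∈ Finset.range n', P (n'+2-j) * a j
                + ∑ j ∈ Finset.range (n'+1), R (n'+2-j) * c j‖
            ≤ ‖e‖⁻¹ * (K * A * (2 * lam^(n'-1) / σ^(2+1)) + K / lam * (2 * lam^n' / σ^(1+1))) := by
              apply mul_le_mul_of_nonneg_left _ (by positivity)
              calc ‖_ + _‖ ≤ _ + _ := norm_add_le _ _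
                _ ≤ _ := add_le_add hS1b hS2b
          _ = ‖e⁻¹‖*(2*K*A/σ^3 + 2*K/σ^2) * lam^m := by
              rw [norm_inv]
              have h1 : n' - 1 = m := by omega
              have h2 : lam^n' = lam^m * lam := by rw [hn', pow_succ]
              have h4 : K / lam * (2 * (lam^m * lam) / σ^(1+1)) = 2*K*lam^m/σ^2 := by
                field_simp [hσ0.ne', hlam0.ne']
              rw [h1, h2, h4]
              ring
          _ ≤ (lam/2) * lam^m := by
              apply mul_le_mul_of_nonneg_right _ (by positivity)
              linarith
          _ ≤ lam^n' := by
              rw [hn', pow_succ]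
              have h3 : (0:ℝ) < lam^m := by positivity
              calc lam/2 * lam^m = lam^m * lam / 2 := by ring
                _ ≤ lam^m * lam := by
                    apply half_le_self
                    positivity
    refine ⟨?_, hcgoal⟩
    -- bound on a n
    rw [ha, aF_eq, ← ha, ← hc]
    rw [norm_mul]
    have hδ : ‖(if n = 0 then (1:ℂ) else 0)‖ ≤ 1 := by
      by_cases h : n = 0 <;> simp [h]
    have hsplit : ‖(if n = 0 then (1:ℂ) else 0) - al * c (n+1) - S 1 * c n
        - ∑ j ∈ Finset.range n, (Q (n+1-j) * a j + S (n+1-j) * c j)‖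
        ≤ 1 + ‖al‖ * ‖c (n+1)‖ + ‖S 1‖ * ‖c n‖
          + ‖∑ j ∈ Finset.range n, (Q (n+1-j) * a j + S (n+1-j) * c j)‖ := by
      calc ‖_ - _ - _ - _‖ ≤ ‖(if n = 0 then (1:ℂ) else 0) - al * c (n+1) - S 1 * c n‖
            + ‖∑ j ∈ Finset.range n, (Q (n+1-j) * a j + S (n+1-j) * c j)‖ := norm_sub_le _ _
        _ ≤ (‖(if n = 0 then (1:ℂ) else 0) - al * c (n+1)‖ + ‖S 1 * c n‖)
            + ‖∑ j ∈ Finset.range n, (Q (n+1-j) * a j + S (n+1-j) * c j)‖ := by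
            apply add_le_add_left (norm_sub_le _ _)
        _ ≤ ((‖(if n = 0 then (1:ℂ) else 0)‖ + ‖al * c (n+1)‖) + ‖S 1 * c n‖)
            + ‖∑ j ∈ Finset.range n, (Q (n+1-j) * a j + S (n+1-j) * c j)‖ := by
            apply add_le_add_left; apply add_le_add_left (norm_sub_le _ _)
        _ ≤ _ := by
            rw [norm_mul, norm_mul]
            apply add_le_add_left; apply add_le_add_left
            apply add_le_add_left hδ
    match n with
    | 0 =>
      have hc0 : c 0 = 0 := by rw [hc]; rfl
      simp only [Finset.range_zero, Finset.sum_empty, norm_zero, pow_zero, mul_one]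
      calc ‖q⁻¹‖ * ‖(if 0 = 0 then (1:ℂ) else 0) - al * c (0+1) - S 1 * c 0
            - ∑ j ∈ Finset.range 0, (Q (0+1-j) * a j + S (0+1-j) * c j)‖
          ≤ ‖q⁻¹‖ * (1 + ‖al‖ * ‖c 1‖ + ‖S 1‖ * ‖c 0‖ + ‖(0:ℂ)‖) := by
            apply mul_le_mul_of_nonneg_left _ (by positivity)
            calc _ ≤ _ := hsplit
              _ = 1 + ‖al‖ * ‖c (0+1)‖ + ‖S 1‖ * ‖c 0‖ + ‖(0:ℂ)‖ := by
                  rw [Finset.range_zero, Finset.sum_empty]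
        _ ≤ ‖q⁻¹‖ * (1 + ‖al‖ * 1 + ‖S 1‖ * 0 + 0) := by
            apply mul_le_mul_of_nonneg_left _ (by positivity)
            rw [hc0]
            simp only [norm_zero, mul_zero]
            have : ‖c 1‖ ≤ 1 := by simpa using hcgoal
            have hal : ‖al‖ * ‖c 1‖ ≤ ‖al‖ * 1 := mul_le_mul_of_nonneg_left this (norm_nonneg _)
            linarith
        _ = ‖q⁻¹‖ * (1 + ‖al‖) := by ring
        _ ≤ A := by rw [hq1al]; linarith
    | (m+1) =>
      set n' := m + 1 with hn'
      have hSig : ‖∑ j ∈ Finset.range n', (Q (n'+1-j) * a j + S (n'+1-j) * c j)‖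
          ≤ K * (A+1) * (2 * lam^(n'-1) / σ^(1+1)) := by
        calc ‖∑ j ∈ Finset.range n', (Q (n'+1-j) * a j + S (n'+1-j) * c j)‖
            ≤ ∑ j ∈ Finset.range n', ‖Q (n'+1-j) * a j + S (n'+1-j) * c j‖ := norm_sum_le _ _
          _ ≤ ∑ j ∈ Finset.range n', (K/σ^(n'+1-j)) * ((A+1) * lam^j) := by
              apply Finset.sum_le_sum
              intro j hj
              have hj' := Finset.mem_range.mp hj
              calc ‖Q (n'+1-j) * a j + S (n'+1-j) * c j‖
                  ≤ ‖Q (n'+1-j) * a j‖ + ‖S (n'+1-j) * c j‖ := norm_add_le _ _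
                _ ≤ (K/σ^(n'+1-j)) * (A * lam^j) + (K/σ^(n'+1-j)) * (lam^j/lam) := by
                    rw [norm_mul, norm_mul]
                    apply add_le_add
                    · exact mul_le_mul (hQb _) (Ha j hj') (norm_nonneg _) (by positivity)
                    · exact mul_le_mul (hSb _) (Hc j (le_of_lt hj')) (norm_nonneg _) (by positivity)
                _ ≤ (K/σ^(n'+1-j)) * ((A+1) * lam^j) := by
                    have h1 : lam^j / lam ≤ lam^j := by
                      rw [div_le_iff₀ hlam0]
                      nth_rewrite 1 [← mul_one (lam^j)]
                      apply mul_le_mul_of_nonneg_left hlam1 (by positivity)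
                    have h2 : (0:ℝ) ≤ K/σ^(n'+1-j) := by positivity
                    nlinarith [pow_pos hlam0 j]
          _ = K * (A+1) * ∑ j ∈ Finset.range n', lam^j / σ^(n'+1-j) := by
              rw [Finset.mul_sum]
              exact Finset.sum_congr rfl fun j hj => by ring
          _ ≤ K * (A+1) * (2 * lam^(n'-1) / σ^(1+1)) := by
              apply mul_le_mul_of_nonneg_left (geo σ lam hσ0 hσlam n' 1) (by positivity)
      calc ‖q⁻¹‖ * ‖(if n' = 0 then (1:ℂ) else 0) - al * c (n'+1) - S 1 * c n'
            - ∑ j ∈ Finset.range n', (Q (n'+1-j) * a j + S (n'+1-j) * c j)‖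
          ≤ ‖q⁻¹‖ * (1 + ‖al‖ * lam^n' + (K/σ) * (lam^n'/lam)
              + K * (A+1) * (2 * lam^(n'-1) / σ^(1+1))) := by
            apply mul_le_mul_of_nonneg_left _ (by positivity)
            refine le_trans hsplit ?_
            have t1 : ‖al‖ * ‖c (n'+1)‖ ≤ ‖al‖ * lam^n' :=
              mul_le_mul_of_nonneg_left hcgoal (norm_nonneg _)
            have t2 : ‖S 1‖ * ‖c n'‖ ≤ (K/σ) * (lam^n'/lam) :=
              mul_le_mul (by simpa using hSb 1) (Hc n' le_rfl) (norm_nonneg _) (by positivity)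
            linarith [hSig]
        _ ≤ ‖q⁻¹‖ * (1 + ‖al‖) * lam^n' + ‖q⁻¹‖ * (K/σ + 2*K*(A+1)/σ^2) * lam^m := by
            have h1 : n' - 1 = m := by omega
            have h2 : lam^n' = lam^m * lam := by rw [hn', pow_succ]
            have h3 : (0:ℝ) < lam^m := by positivity
            have hXl : (1:ℝ) ≤ lam^m * lam := by
              have h7 : (1:ℝ) ≤ lam^m := one_le_pow₀ hlam1
              nlinarith
            have hdiv : lam^m * lam / lam = lam^m := by
              field_simp
            have hstep : 1 + ‖al‖ * (lam^m*lam) ≤ (1+‖al‖) * (lam^m*lam) := by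
              nlinarith [norm_nonneg al]
            rw [h1, h2, hdiv]
            have main : ‖q⁻¹‖*(1 + ‖al‖*(lam^m*lam)) ≤ ‖q⁻¹‖*((1+‖al‖)*(lam^m*lam)) :=
              mul_le_mul_of_nonneg_left hstep (norm_nonneg _)
            have hsq : σ^(1+1) = σ^2 := by norm_num
            rw [hsq]
            have expand1 : ‖q⁻¹‖ * (1 + ‖al‖ * (lam^m*lam) + (K/σ) * lam^m
                + K * (A+1) * (2 * lam^m / σ^2))
                = ‖q⁻¹‖*(1 + ‖al‖*(lam^m*lam)) + ‖q⁻¹‖ * (K/σ + 2*K*(A+1)/σ^2) * lam^m := by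
              ring
            have expand2 : ‖q⁻¹‖ * (1 + ‖al‖) * (lam^m*lam)
                = ‖q⁻¹‖*((1+‖al‖)*(lam^m*lam)) := by ring
            rw [expand1, expand2]
            linarith
        _ ≤ ((A-1)/2) * lam^n' + (lam/2) * lam^m := by
            apply add_le_add
            · apply mul_le_mul_of_nonneg_right (le_of_eq hq1al) (by positivity)
            · apply mul_le_mul_of_nonneg_right _ (by positivity)
              linarith
        _ ≤ A * lam^n' := by
            have h2 : lam^n' = lam^m * lam := by rw [hn', pow_succ]
            rw [h2]
            have e5 : (lam/2) * lam^m = (1/2) * (lam^m * lam) := by ring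
            have h6 : ((A-1)/2 + 1/2) * (lam^m*lam) ≤ A * (lam^m*lam) := by
              apply mul_le_mul_of_nonneg_right _ (by positivity)
              linarith
            linarith [e5, h6]
  -- wrap up
  refine ⟨A, lam, hA1, hlam1, fun n => ⟨(key n).1, ?_⟩⟩
  match n with
  | 0 =>
    have hc0 : c 0 = 0 := by rw [hc]; rfl
    rw [hc0]
    simp only [norm_zero, pow_zero, mul_one]
    linarith
  | (m+1) =>
    calc ‖c (m+1)‖ ≤ lam^m := (key m).2
      _ ≤ A * lam^(m+1) := by
          rw [pow_succ]
          have h3 : (0:ℝ) < lam^m := by positivity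
          have h4 : lam^m * 1 ≤ lam^m * lam := mul_le_mul_of_nonneg_left hlam1 h3.le
          have h5 : 1 * (lam^m*lam) ≤ A * (lam^m*lam) := by
            apply mul_le_mul_of_nonneg_right hA1
            positivity
          linarith

set_option maxHeartbeats 2000000 in
/-- Case (i) of Lemma 3.7: with additionally `sᵀM₂s = 0` and `b(z) = z·r`, the
power-series solution of `M(z)t(z) = b(z)` has leading coefficient
`t₀ = (rᵀr / rᵀM₁s) • s`, and `rᵀM₁s ≠ 0`. -/
theorem stmt_15 (M : ℕ → Matrix (Fin 2) (Fin 2) ℂ)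
    (s r : Fin 2 → ℂ) (hs : s ≠ 0) (hr : r ≠ 0)
    (hMconv : ∃ C ρ : ℝ, 0 < ρ ∧ ∀ n i j, ‖M n i j‖ ≤ C / ρ ^ n)
    (hM0ne : M 0 ≠ 0)
    (hnull : ∀ v, (M 0).mulVec v = 0 ↔ ∃ c : ℂ, v = c • s)
    (hran : ∀ v, (∃ u, (M 0).mulVec u = v) ↔ ∃ c : ℂ, v = c • r)
    (hsr : s ⬝ᵥ r = 0)
    (hsM1s : s ⬝ᵥ (M 1).mulVec s = 0)
    (hM0inv : (!![s ⬝ᵥ (M 2).mulVec s, s ⬝ᵥ (M 1).mulVec r;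
                 r ⬝ᵥ (M 1).mulVec s, r ⬝ᵥ (M 0).mulVec r]).det ≠ 0)
    (hsM2s : s ⬝ᵥ (M 2).mulVec s = 0)
    (b : ℕ → Fin 2 → ℂ) (hb : b = fun n => if n = 1 then r else 0) :
    r ⬝ᵥ (M 1).mulVec s ≠ 0 ∧
    ∃ t : ℕ → Fin 2 → ℂ,
      (∃ C ρ : ℝ, 0 < ρ ∧ ∀ n i, ‖t n i‖ ≤ C / ρ ^ n) ∧
      (∀ n, ∑ l ∈ Finset.range (n + 1), (M l).mulVec (t (n - l)) = b n) ∧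
      t 0 = ((r ⬝ᵥ r) / (r ⬝ᵥ (M 1).mulVec s)) • s := by
  classical
  have hdet := hM0inv
  rw [Matrix.det_fin_two_of, hsM2s] at hdet
  have hprod : s ⬝ᵥ (M 1).mulVec r * (r ⬝ᵥ (M 1).mulVec s) ≠ 0 := by
    intro h; apply hdet; rw [h]; ring
  have hsM1r : s ⬝ᵥ (M 1).mulVec r ≠ 0 := fun h => hprod (by rw [h]; ring)
  have hrM1s : r ⬝ᵥ (M 1).mulVec s ≠ 0 := fun h => hprod (by rw [h]; ring)
  refine ⟨hrM1s, ?_⟩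
  have hM0s : (M 0).mulVec s = 0 := (hnull s).mpr ⟨1, (one_smul ℂ s).symm⟩
  have hsne : s 0 ≠ 0 ∨ s 1 ≠ 0 := by
    by_contra h
    push_neg at h
    exact hs (funext fun i => by fin_cases i <;> simp [h.1, h.2])
  -- r is not a multiple of s
  have hnotmul : ∀ k : ℂ, r ≠ k • s := by
    intro k hk
    apply hrM1s
    rw [hk, smul_dotProduct, hsM1s, smul_eq_mul, mul_zero]
  have hD : s 0 * r 1 - s 1 * r 0 ≠ 0 := by
    intro hD0
    rcases hsne with h0 | h1
    · exact hnotmul (r 0 / s 0) (funext fun i => by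
        fin_cases i <;> simp only [Pi.smul_apply, smul_eq_mul, Fin.zero_eta, Fin.mk_one]
        · field_simp
        · field_simp
          linear_combination hD0)
    · exact hnotmul (r 1 / s 1) (funext fun i => by
        fin_cases i <;> simp only [Pi.smul_apply, smul_eq_mul, Fin.zero_eta, Fin.mk_one]
        · field_simp
          linear_combination -hD0
        · field_simp)
  have hspan : ∀ v : Fin 2 → ℂ, ∃ x y : ℂ,
      v = x • s + y • r := by
    intro v
    have hD' : r 1 * s 0 - r 0 * s 1 ≠ 0 := by rw [mul_comm, mul_comm (r 0)]; exact hD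
    refine ⟨(v 0 * r 1 - v 1 * r 0)/(s 0 * r 1 - s 1 * r 0),
            (s 0 * v 1 - s 1 * v 0)/(s 0 * r 1 - s 1 * r 0), funext fun i => ?_⟩
    fin_cases i <;>
      simp only [Pi.add_apply, Pi.smul_apply, smul_eq_mul, Fin.zero_eta, Fin.mk_one] <;>
      field_simp [hD'] <;> ring
  have hrs : r ⬝ᵥ s = 0 := by rw [dotProduct_comm]; exact hsr
  have hdot2 : ∀ (x y : ℂ) (u : Fin 2 → ℂ), u ⬝ᵥ (x • s + y • r) = x * (u ⬝ᵥ s) + y * (u ⬝ᵥ r) := by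
    intro x y u
    rw [dotProduct_add, dotProduct_smul, dotProduct_smul, smul_eq_mul, smul_eq_mul]
  have hss : s ⬝ᵥ s ≠ 0 := by
    intro h0
    obtain ⟨x, y, hxy⟩ := hspan ((M 1).mulVec r)
    apply hsM1r
    rw [hxy, hdot2, h0, hsr]; ring
  have hrr : r ⬝ᵥ r ≠ 0 := by
    intro h0
    obtain ⟨x, y, hxy⟩ := hspan ((M 1).mulVec s)
    apply hrM1s
    rw [hxy, hdot2, h0, hrs]; ring
  have hdecomp : ∀ v : Fin 2 → ℂ,
      v = ((s ⬝ᵥ v)/(s ⬝ᵥ s)) • s + ((r ⬝ᵥ v)/(r ⬝ᵥ r)) • r := by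
    intro v
    obtain ⟨x, y, hxy⟩ := hspan v
    have hx : (s ⬝ᵥ v)/(s ⬝ᵥ s) = x := by
      rw [hxy, hdot2, hsr, mul_zero, add_zero, mul_div_assoc, div_self hss, mul_one]
    have hy : (r ⬝ᵥ v)/(r ⬝ᵥ r) = y := by
      rw [hxy, hdot2, hrs, mul_zero, zero_add, mul_div_assoc, div_self hrr, mul_one]
    rw [hx, hy]; exact hxy
  -- the scalar coefficients
  set Pc : ℕ → ℂ := fun l => (s ⬝ᵥ (M l).mulVec s)/(s ⬝ᵥ s) with hPc
  set Qc : ℕ → ℂ := fun l => (r ⬝ᵥ (M l).mulVec s)/(r ⬝ᵥ r) with hQc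
  set Rc : ℕ → ℂ := fun l => (s ⬝ᵥ (M l).mulVec r)/(s ⬝ᵥ s) with hRc
  set Sc : ℕ → ℂ := fun l => (r ⬝ᵥ (M l).mulVec r)/(r ⬝ᵥ r) with hSc
  have hMs : ∀ l, (M l).mulVec s = Pc l • s + Qc l • r := fun l => hdecomp _
  have hMr : ∀ l, (M l).mulVec r = Rc l • s + Sc l • r := fun l => hdecomp _
  have hP0 : Pc 0 = 0 := by rw [hPc]; simp [hM0s]
  have hQ0 : Qc 0 = 0 := by rw [hQc]; simp [hM0s]
  have hR0 : Rc 0 = 0 := by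
    obtain ⟨k, hk⟩ := (hran ((M 0).mulVec r)).mp ⟨r, rfl⟩
    rw [hRc]; simp only
    rw [hk, dotProduct_smul, hsr, smul_eq_mul, mul_zero, zero_div]
  have hP1 : Pc 1 = 0 := by rw [hPc]; simp only; rw [hsM1s, zero_div]
  have hP2 : Pc 2 = 0 := by rw [hPc]; simp only; rw [hsM2s, zero_div]
  have hQ1ne : Qc 1 ≠ 0 := by
    rw [hQc]; exact div_ne_zero hrM1s hrr
  have hR1ne : Rc 1 ≠ 0 := by
    rw [hRc]; exact div_ne_zero hsM1r hss
  have hS0ne : Sc 0 ≠ 0 := by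
    intro h0
    have h1 := hMr 0
    rw [hR0, h0, zero_smul, zero_smul, add_zero] at h1
    obtain ⟨k, hk⟩ := (hnull r).mp h1
    exact hnotmul k hk
  -- bounds on coefficients
  obtain ⟨C₀, ρ₀, hρ₀, hMb⟩ := hMconv
  have hC₀ : 0 ≤ C₀ := by
    have h := hMb 0 0 0
    have h2 : (0:ℝ) ≤ C₀ / ρ₀ ^ 0 := le_trans (norm_nonneg _) h
    simpa using h2
  have hdotb : ∀ (u v : Fin 2 → ℂ) (l : ℕ),
      ‖u ⬝ᵥ (M l).mulVec v‖ ≤ C₀/ρ₀^l * ((‖u 0‖+‖u 1‖) * (‖v 0‖+‖v 1‖)) := by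
    intro u v l
    have hexp : u ⬝ᵥ (M l).mulVec v
        = u 0 * (M l 0 0 * v 0 + M l 0 1 * v 1) + u 1 * (M l 1 0 * v 0 + M l 1 1 * v 1) := by
      simp [dotProduct, Matrix.mulVec, Fin.sum_univ_two]
    rw [hexp]
    have hb00 := hMb l 0 0
    have hb01 := hMb l 0 1
    have hb10 := hMb l 1 0
    have hb11 := hMb l 1 1
    calc ‖u 0 * (M l 0 0 * v 0 + M l 0 1 * v 1) + u 1 * (M l 1 0 * v 0 + M l 1 1 * v 1)‖
        ≤ ‖u 0‖ * (‖M l 0 0‖*‖v 0‖ + ‖M l 0 1‖*‖v 1‖)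
          + ‖u 1‖ * (‖M l 1 0‖*‖v 0‖ + ‖M l 1 1‖*‖v 1‖) := by
          calc ‖_ + _‖ ≤ ‖u 0 * (M l 0 0 * v 0 + M l 0 1 * v 1)‖
              + ‖u 1 * (M l 1 0 * v 0 + M l 1 1 * v 1)‖ := norm_add_le _ _
            _ ≤ _ := by
              rw [norm_mul, norm_mul]
              apply add_le_add
              · apply mul_le_mul_of_nonneg_left _ (norm_nonneg _)
                calc ‖_ + _‖ ≤ ‖M l 0 0 * v 0‖ + ‖M l 0 1 * v 1‖ := norm_add_le _ _
                  _ = _ := by rw [norm_mul, norm_mul]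
              · apply mul_le_mul_of_nonneg_left _ (norm_nonneg _)
                calc ‖_ + _‖ ≤ ‖M l 1 0 * v 0‖ + ‖M l 1 1 * v 1‖ := norm_add_le _ _
                  _ = _ := by rw [norm_mul, norm_mul]
      _ ≤ ‖u 0‖ * ((C₀/ρ₀^l)*‖v 0‖ + (C₀/ρ₀^l)*‖v 1‖)
          + ‖u 1‖ * ((C₀/ρ₀^l)*‖v 0‖ + (C₀/ρ₀^l)*‖v 1‖) := by
          apply add_le_add
          · apply mul_le_mul_of_nonneg_left _ (norm_nonneg _)
            apply add_le_add
            · exact mul_le_mul_of_nonneg_right hb00 (norm_nonneg _)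
            · exact mul_le_mul_of_nonneg_right hb01 (norm_nonneg _)
          · apply mul_le_mul_of_nonneg_left _ (norm_nonneg _)
            apply add_le_add
            · exact mul_le_mul_of_nonneg_right hb10 (norm_nonneg _)
            · exact mul_le_mul_of_nonneg_right hb11 (norm_nonneg _)
      _ = C₀/ρ₀^l * ((‖u 0‖+‖u 1‖) * (‖v 0‖+‖v 1‖)) := by ring
  obtain ⟨T, hT⟩ : ∃ x : ℝ, x = ‖s 0‖+‖s 1‖+‖r 0‖+‖r 1‖ := ⟨_, rfl⟩
  obtain ⟨K, hK⟩ : ∃ x : ℝ, x = C₀ * T^2 * (‖s ⬝ᵥ s‖⁻¹ + ‖r ⬝ᵥ r‖⁻¹) := ⟨_, rfl⟩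
  have hT0 : 0 ≤ T := by
    rw [hT]; positivity
  have hK0 : 0 ≤ K := by
    rw [hK]; positivity
  have hgen : ∀ (u v : Fin 2 → ℂ) (d : ℂ) (l : ℕ),
      (‖u 0‖+‖u 1‖) * (‖v 0‖+‖v 1‖) ≤ T^2 → ‖d‖⁻¹ ≤ ‖s ⬝ᵥ s‖⁻¹ + ‖r ⬝ᵥ r‖⁻¹ →
      ‖(u ⬝ᵥ (M l).mulVec v)/d‖ ≤ K/ρ₀^l := by
    intro u v d l hTb hdb
    calc ‖(u ⬝ᵥ (M l).mulVec v)/d‖ = ‖u ⬝ᵥ (M l).mulVec v‖ * ‖d‖⁻¹ := by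
          rw [norm_div, div_eq_mul_inv]
      _ ≤ (C₀/ρ₀^l * ((‖u 0‖+‖u 1‖) * (‖v 0‖+‖v 1‖))) * ‖d‖⁻¹ :=
          mul_le_mul_of_nonneg_right (hdotb u v l) (by positivity)
      _ ≤ (C₀/ρ₀^l * T^2) * (‖s ⬝ᵥ s‖⁻¹ + ‖r ⬝ᵥ r‖⁻¹) := by
          apply mul_le_mul _ hdb (by positivity) (by positivity)
          apply mul_le_mul_of_nonneg_left hTb (by positivity)
      _ = K/ρ₀^l := by rw [hK]; ring
  have hTs : (‖s 0‖+‖s 1‖) * (‖s 0‖+‖s 1‖) ≤ T^2 := by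
    rw [hT]
    nlinarith [norm_nonneg (s 0), norm_nonneg (s 1), norm_nonneg (r 0), norm_nonneg (r 1)]
  have hTr : (‖r 0‖+‖r 1‖) * (‖r 0‖+‖r 1‖) ≤ T^2 := by
    rw [hT]
    nlinarith [norm_nonneg (s 0), norm_nonneg (s 1), norm_nonneg (r 0), norm_nonneg (r 1)]
  have hTsr : (‖s 0‖+‖s 1‖) * (‖r 0‖+‖r 1‖) ≤ T^2 := by
    rw [hT]
    nlinarith [norm_nonneg (s 0), norm_nonneg (s 1), norm_nonneg (r 0), norm_nonneg (r 1)]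
  have hTrs : (‖r 0‖+‖r 1‖) * (‖s 0‖+‖s 1‖) ≤ T^2 := by
    rw [hT]
    nlinarith [norm_nonneg (s 0), norm_nonneg (s 1), norm_nonneg (r 0), norm_nonneg (r 1)]
  have hdss : ‖s ⬝ᵥ s‖⁻¹ ≤ ‖s ⬝ᵥ s‖⁻¹ + ‖r ⬝ᵥ r‖⁻¹ := by
    have : (0:ℝ) ≤ ‖r ⬝ᵥ r‖⁻¹ := by positivity
    linarith
  have hdrr : ‖r ⬝ᵥ r‖⁻¹ ≤ ‖s ⬝ᵥ s‖⁻¹ + ‖r ⬝ᵥ r‖⁻¹ := by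
    have : (0:ℝ) ≤ ‖s ⬝ᵥ s‖⁻¹ := by positivity
    linarith
  have hPb : ∀ l, ‖Pc l‖ ≤ K/ρ₀^l := fun l => hgen s s _ l hTs hdss
  have hQb : ∀ l, ‖Qc l‖ ≤ K/ρ₀^l := fun l => hgen r s _ l hTrs hdrr
  have hRb : ∀ l, ‖Rc l‖ ≤ K/ρ₀^l := fun l => hgen s r _ l hTsr hdss
  have hSb : ∀ l, ‖Sc l‖ ≤ K/ρ₀^l := fun l => hgen r r _ l hTr hdrr
  -- the solution sequences
  obtain ⟨A, lam, hA1, hlam1, hbnd⟩ :=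
    bound_lemma Pc Qc Rc Sc (Qc 1) (Rc 1) (Sc 0) K ρ₀ hρ₀ hK0 hPb hQb hRb hSb
  have hEA := EA_lemma Pc Qc Rc Sc (Qc 1) (Rc 1) (Sc 0) hR1ne hP0 hR0 hP1 hP2 rfl
  have hEB := EB_lemma Pc Qc Rc Sc (Qc 1) (Rc 1) (Sc 0) hQ1ne hQ0 rfl rfl
  set av := aF Pc Qc Rc Sc (Qc 1)⁻¹ (Rc 1)⁻¹ (Sc 0) with hav
  set cv := cF Pc Qc Rc Sc (Qc 1)⁻¹ (Rc 1)⁻¹ (Sc 0) with hcv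
  have hcv0 : cv 0 = 0 := cF_zero _ _ _ _ _ _ _
  have hcv1 : cv 1 = 0 := by
    rw [hcv, cF_succ, ← hcv]
    simp [hcv0]
  have hav0 : av 0 = (r ⬝ᵥ r) / (r ⬝ᵥ (M 1).mulVec s) := by
    rw [hav, aF_eq, ← hav, ← hcv]
    simp only [Finset.range_zero, Finset.sum_empty, if_pos rfl]
    rw [hcv0, hcv1]
    have hq1 : Qc 1 = (r ⬝ᵥ (M 1).mulVec s) / (r ⬝ᵥ r) := by rw [hQc]
    rw [hq1, inv_div]
    simp
  have hlam0 : (0:ℝ) < lam := by linarith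
  refine ⟨fun n => av n • s + cv n • r, ?_, ?_, ?_⟩
  · -- norm bound
    refine ⟨A * T, 1/lam, by positivity, ?_⟩
    intro n i
    have hbn := hbnd n
    have hC : A * T / (1/lam)^n = A * T * lam^n := by
      rw [one_div, inv_pow, div_eq_mul_inv, inv_inv]
    rw [hC]
    have hsum : ‖(av n • s + cv n • r) i‖ ≤ ‖av n‖ * ‖s i‖ + ‖cv n‖ * ‖r i‖ := by
      calc ‖(av n • s + cv n • r) i‖ = ‖av n * s i + cv n * r i‖ := by
            simp [Pi.add_apply, Pi.smul_apply, smul_eq_mul]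
        _ ≤ ‖av n * s i‖ + ‖cv n * r i‖ := norm_add_le _ _
        _ = _ := by rw [norm_mul, norm_mul]
    have h1 : ‖av n‖ * ‖s i‖ ≤ A * lam^n * ‖s i‖ :=
      mul_le_mul_of_nonneg_right hbn.1 (norm_nonneg _)
    have h2 : ‖cv n‖ * ‖r i‖ ≤ A * lam^n * ‖r i‖ :=
      mul_le_mul_of_nonneg_right hbn.2 (norm_nonneg _)
    have h3 : A * lam^n * ‖s i‖ + A * lam^n * ‖r i‖ ≤ A * T * lam^n := by
      have h4 : ‖s i‖ + ‖r i‖ ≤ T := by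
        rw [hT]
        have e0 := norm_nonneg (s 0)
        have e1 := norm_nonneg (s 1)
        have e2 := norm_nonneg (r 0)
        have e3 := norm_nonneg (r 1)
        fin_cases i
        · show ‖s 0‖ + ‖r 0‖ ≤ _
          linarith
        · show ‖s 1‖ + ‖r 1‖ ≤ _
          linarith
      have h5 : (0:ℝ) ≤ A * lam^n := by positivity
      calc A * lam^n * ‖s i‖ + A * lam^n * ‖r i‖ = (A * lam^n) * (‖s i‖ + ‖r i‖) := by ring
        _ ≤ (A * lam^n) * T := mul_le_mul_of_nonneg_left h4 h5
        _ = A * T * lam^n := by ring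
    linarith
  · -- the convolution equations
    intro n
    show ∑ l ∈ Finset.range (n+1), (M l).mulVec (av (n-l) • s + cv (n-l) • r) = b n
    have hterm : ∀ l, (M l).mulVec (av (n-l) • s + cv (n-l) • r)
        = (Pc l * av (n-l) + Rc l * cv (n-l)) • s
          + (Qc l * av (n-l) + Sc l * cv (n-l)) • r := by
      intro l
      rw [Matrix.mulVec_add, Matrix.mulVec_smul, Matrix.mulVec_smul, hMs l, hMr l]
      module
    rw [Finset.sum_congr rfl (fun l _ => hterm l), Finset.sum_add_distrib,
      ← Finset.sum_smul, ← Finset.sum_smul, hEA n, hEB n, hb]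
    by_cases hn : n = 1 <;> simp [hn]
  · -- the value of t 0
    show av 0 • s + cv 0 • r = ((r ⬝ᵥ r) / (r ⬝ᵥ (M 1).mulVec s)) • s
    rw [hav0, hcv0]
    simp
end
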